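/- arXiv:2106.12500 — 2 statements merged into one kernel-verified Lean document; each statement's English description precedes it below -/
import Mathlib

section
/- For all x, y ∈ W̃ one has the inclusions IxIyI ⊆ ⋃_{z ≤ y} IxzI and IxIyI ⊆ ⋃_{z ≤ x} IzyI, where the (disjoint) unions run over the elements z ∈ W̃ with z ≤ y, respectively z ≤ x, in the extended Bruhat order. -/
open scoped Pointwise

/-! ## Setting

`G` is a group with subgroups `I` and `N` such that `T := I ⊓ N` is normal in `N`, and
`W̃ := N/T` is presented via a surjective homomorphism `π : N →* W̃` whose kernel consists of
the elements of `N` lying in `I`.  `W̃ = W_aff ⋊ Ω` is an internal semidirect product, where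
`W_aff` carries a Coxeter system `cs` (with simple reflections indexed by `B`), the length
function `ℓ` of `cs` is extended to `W̃` by `ℓ (w * u) = ℓ w` for `w ∈ W_aff`, `u ∈ Ω`, and
the axioms (T0), (T3), (T4), (TΩ), (TS), (TF) hold. -/

/-- The double coset `I·n·I ⊆ G` attached to an element `w ∈ W̃ = N/T`, described as the union
of `I·n·I` over all representatives `n ∈ N` of `w` (these double cosets all coincide, since any
two representatives differ by an element of `T = I ⊓ N ⊆ I`). -/
def IwI {G : Type} [Group G] {W : Type} [Group W] (I : Subgroup G) {N : Subgroup G}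
    (π : N →* W) (w : W) : Set G :=
  {g : G | ∃ n : N, π n = w ∧ ∃ i ∈ I, ∃ j ∈ I, g = i * (n : G) * j}

/-- The basis element `i_w = 1_{IwI} : G → ℤ` of the Iwahori–Hecke ring. -/
noncomputable def iw {G : Type} [Group G] {W : Type} [Group W] (I : Subgroup G) {N : Subgroup G}
    (π : N →* W) (w : W) : G → ℤ :=
  (IwI I π w).indicator fun _ => (1 : ℤ)

/-- Convolution of `ℤ`-valued functions on `G` relative to `I`:
`(f ⋆ f')(x) = Σ_{yI ∈ G/I} f(y)·f'(y⁻¹x)` (the value of `f` at a left coset `yI` is computed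
at a chosen representative; this is independent of the choices when `f` is right `I`-invariant
and `f'` is left `I`-invariant). -/
noncomputable def hconv {G : Type} [Group G] (I : Subgroup G) (f f' : G → ℤ) : G → ℤ :=
  fun x => ∑ᶠ y : G ⧸ I, f (Quotient.out y) * f' ((Quotient.out y)⁻¹ * x)

/-- The left cosets of `I` contained in a (right `I`-stable) subset `A ⊆ G`, viewed as the
image of `A` in `G/I`. -/
def leftCosetsIn {G : Type} [Group G] (I : Subgroup G) (A : Set G) : Set (G ⧸ I) :=
  QuotientGroup.mk '' A

/-- A function `f : G → ℤ` belongs to the Iwahori–Hecke ring `H(G,I)` iff it is left and right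
`I`-invariant and vanishes outside finitely many double cosets of `I`. -/
def IsHeckeElt {G : Type} [Group G] {W : Type} [Group W] (I : Subgroup G) {N : Subgroup G}
    (π : N →* W) (f : G → ℤ) : Prop :=
  (∀ i ∈ I, ∀ g : G, f (i * g) = f g) ∧ (∀ i ∈ I, ∀ g : G, f (g * i) = f g) ∧
    {w : W | ∃ g ∈ IwI I π w, f g ≠ 0}.Finite

/-- The data and axioms of the Iwahori–Matsumoto setting. -/
structure IwahoriHeckeSetup (G W B : Type) [Group G] [Group W] (M : CoxeterMatrix B) where
  /-- the "Iwahori" subgroup -/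
  I : Subgroup G
  /-- the subgroup `N` -/
  N : Subgroup G
  /-- the quotient map `N → W̃ = N/T`, `T = I ∩ N` -/
  π : N →* W
  π_surjective : Function.Surjective π
  /-- the kernel of `π` is exactly `T = I ∩ N` (so `T` is normal in `N` and `W̃ = N/T`) -/
  π_ker : ∀ n : N, π n = 1 ↔ (n : G) ∈ I
  /-- the normal subgroup `W_aff` of `W̃` -/
  Waff : Subgroup W
  /-- the subgroup `Ω` of `W̃` -/
  Om : Subgroup W
  Waff_normal : Waff.Normal
  /-- `W̃ = W_aff · Ω` -/
  sd_prod : ∀ w : W, ∃ wa ∈ Waff, ∃ u ∈ Om, w = wa * u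
  /-- `W_aff ∩ Ω = 1` -/
  sd_disj : Waff ⊓ Om = ⊥
  /-- the Coxeter system `(W_aff, S)`, `S = {simple b | b : B}` -/
  cs : CoxeterSystem M Waff
  /-- the length function of `(W_aff, S)`, extended to `W̃` -/
  len : W → ℕ
  len_spec : ∀ (wa : Waff) (u : Om), len ((wa : W) * (u : W)) = cs.length wa
  /-- `q w` = the number of left cosets of `I` contained in `IwI` -/
  q : W → ℕ
  /-- (T0): `G` is covered by the double cosets `IwI`, `w ∈ W̃` ... -/
  T0_cover : ∀ g : G, ∃ w : W, g ∈ IwI I π w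
  /-- (T0): ... and distinct double cosets are disjoint -/
  T0_disjoint : ∀ w w' : W, w ≠ w' → Disjoint (IwI I π w) (IwI I π w')
  /-- (T3): `sIw ⊆ IwI ∪ IswI` for all `s ∈ S`, `w ∈ W̃` -/
  T3 : ∀ (b : B) (w : W) (ns nw : N), π ns = (cs.simple b : W) → π nw = w →
      ∀ i ∈ I, (ns : G) * i * (nw : G) ∈ IwI I π w ∪ IwI I π ((cs.simple b : W) * w)
  /-- (T4): `sIs ⊄ I` for all `s ∈ S` -/
  T4 : ∀ (b : B) (ns ns' : N), π ns = (cs.simple b : W) → π ns' = (cs.simple b : W) →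
      ¬ (∀ i ∈ I, (ns : G) * i * (ns' : G) ∈ I)
  /-- (TΩ): representatives in `N` of elements of `Ω` normalize `I` -/
  TOm : ∀ n : N, π n ∈ Om → ∀ i ∈ I, (n : G) * i * (n : G)⁻¹ ∈ I
  /-- (TS): `uSu⁻¹ = S` for all `u ∈ Ω` -/
  TS : ∀ u ∈ Om, ∀ b : B, ∃ b' : B, u * (cs.simple b : W) * u⁻¹ = (cs.simple b' : W)
  /-- (TF): every double coset `IwI` is a finite union of left cosets of `I`, and `q w` is
  their number -/
  TF : ∀ w : W, (leftCosetsIn I (IwI I π w)).Finite ∧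
      q w = (leftCosetsIn I (IwI I π w)).ncard

/-- The Bruhat order on the Coxeter group: `z ≤ y` iff `z` is the product of a subword
(in order) of some reduced word for `y`. -/
def bruhatLE {B : Type} {W' : Type} [Group W'] {M : CoxeterMatrix B}
    (cs : CoxeterSystem M W') (z y : W') : Prop :=
  ∃ ω : List B, cs.wordProd ω = y ∧ ω.length = cs.length y ∧
    ∃ ω' : List B, ω'.Sublist ω ∧ cs.wordProd ω' = z

/-- The extension of the Bruhat order to `W̃ = W_aff ⋊ Ω`: `z·u ≤ y·u'` (for
`z, y ∈ W_aff`, `u, u' ∈ Ω`) iff `z ≤ y` and `u = u'`. -/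
def extBruhatLE {G W B : Type} [Group G] [Group W] {M : CoxeterMatrix B}
    (D : IwahoriHeckeSetup G W B M) (z y : W) : Prop :=
  ∃ (za ya : D.Waff) (u : D.Om), z = (za : W) * (u : W) ∧ y = (ya : W) * (u : W) ∧
    bruhatLE D.cs za ya

section Helpers

namespace IwahoriHeckeSetup

variable {G W B : Type} [Group G] [Group W] {M : CoxeterMatrix B}
variable (D : IwahoriHeckeSetup G W B M)

lemma mem_IwI' (n : D.N) {i j : G} (hi : i ∈ D.I) (hj : j ∈ D.I) :
    i * (n : G) * j ∈ IwI D.I D.π (D.π n) := ⟨n, rfl, i, hi, j, hj, rfl⟩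

lemma rep_eq {n n' : D.N} (h : D.π n = D.π n') :
    ∃ t : G, t ∈ D.I ∧ (n' : G) = t * (n : G) := by
  refine ⟨((n' * n⁻¹ : D.N) : G), ?_, by push_cast; group⟩
  rw [← D.π_ker]
  rw [map_mul, map_inv, h, mul_inv_cancel]

lemma mem_IwI_iff_rep {w : W} (n : D.N) (hn : D.π n = w) (g : G) :
    g ∈ IwI D.I D.π w ↔ ∃ i ∈ D.I, ∃ j ∈ D.I, g = i * (n : G) * j := by
  constructor
  · rintro ⟨n', hn', i, hi, j, hj, rfl⟩
    obtain ⟨t, ht, hteq⟩ := D.rep_eq (hn.trans hn'.symm)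
    exact ⟨i * t, mul_mem hi ht, j, hj, by rw [hteq]; group⟩
  · rintro ⟨i, hi, j, hj, rfl⟩
    exact hn ▸ D.mem_IwI' n hi hj

lemma IwI_mul_right {w : W} {g i : G} (hg : g ∈ IwI D.I D.π w) (hi : i ∈ D.I) :
    g * i ∈ IwI D.I D.π w := by
  obtain ⟨n, hn, a, ha, b, hb, rfl⟩ := hg
  exact ⟨n, hn, a, ha, b * i, mul_mem hb hi, by group⟩

lemma IwI_mul_left {w : W} {g i : G} (hg : g ∈ IwI D.I D.π w) (hi : i ∈ D.I) :
    i * g ∈ IwI D.I D.π w := by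
  obtain ⟨n, hn, a, ha, b, hb, rfl⟩ := hg
  exact ⟨n, hn, i * a, mul_mem hi ha, b, hb, by group⟩

lemma IwI_inv {w : W} {g : G} (hg : g ∈ IwI D.I D.π w) : g⁻¹ ∈ IwI D.I D.π w⁻¹ := by
  obtain ⟨n, hn, a, ha, b, hb, rfl⟩ := hg
  exact ⟨n⁻¹, by rw [map_inv, hn], b⁻¹, inv_mem hb, a⁻¹, inv_mem ha, by push_cast; group⟩

lemma simple_coe_inv (b : B) :
    ((D.cs.simple b : D.Waff) : W)⁻¹ = ((D.cs.simple b : D.Waff) : W) := by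
  have h : (D.cs.simple b)⁻¹ = D.cs.simple b :=
    inv_eq_of_mul_eq_one_right (D.cs.simple_mul_simple_self b)
  rw [← Subgroup.coe_inv, h]

/-- the right-handed version of (T3) -/
lemma T3r (b : B) (w : W) (nw ns : D.N) (hnw : D.π nw = w)
    (hns : D.π ns = ((D.cs.simple b : D.Waff) : W)) {i : G} (hi : i ∈ D.I) :
    (nw : G) * i * (ns : G) ∈
      IwI D.I D.π w ∪ IwI D.I D.π (w * ((D.cs.simple b : D.Waff) : W)) := by
  have h1 : D.π ns⁻¹ = ((D.cs.simple b : D.Waff) : W) := by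
    rw [map_inv, hns, simple_coe_inv]
  have h2 : D.π nw⁻¹ = w⁻¹ := by rw [map_inv, hnw]
  have key := D.T3 b w⁻¹ ns⁻¹ nw⁻¹ h1 h2 i⁻¹ (inv_mem hi)
  have heq : (nw : G) * i * (ns : G) =
      (((ns⁻¹ : D.N) : G) * i⁻¹ * ((nw⁻¹ : D.N) : G))⁻¹ := by push_cast; group
  rcases key with h | h
  · left
    have := D.IwI_inv h
    rwa [inv_inv, ← heq] at this
  · right
    have := D.IwI_inv h
    rw [← heq] at this
    rwa [mul_inv_rev, inv_inv, simple_coe_inv] at this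

lemma decomp_unique {wa wa' : D.Waff} {u u' : D.Om}
    (h : (wa : W) * (u : W) = (wa' : W) * (u' : W)) : wa = wa' ∧ u = u' := by
  have hkey : (wa' : W)⁻¹ * (wa : W) = (u' : W) * (u : W)⁻¹ := by
    calc (wa' : W)⁻¹ * (wa : W) = (wa' : W)⁻¹ * (((wa : W) * (u : W)) * (u : W)⁻¹) := by group
      _ = (wa' : W)⁻¹ * (((wa' : W) * (u' : W)) * (u : W)⁻¹) := by rw [h]
      _ = (u' : W) * (u : W)⁻¹ := by group
  have hW : (wa' : W)⁻¹ * (wa : W) ∈ D.Waff := mul_mem (inv_mem wa'.2) wa.2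
  have hO : (wa' : W)⁻¹ * (wa : W) ∈ D.Om := hkey ▸ mul_mem u'.2 (inv_mem u.2)
  have : (wa' : W)⁻¹ * (wa : W) ∈ D.Waff ⊓ D.Om := ⟨hW, hO⟩
  rw [D.sd_disj, Subgroup.mem_bot] at this
  have h1 : (wa : W) = (wa' : W) := by
    rw [inv_mul_eq_one] at this
    exact this.symm
  have h2 : (u : W) = (u' : W) := by
    rw [h1] at h
    exact mul_left_cancel h
  exact ⟨Subtype.ext h1, Subtype.ext h2⟩

lemma tail_reduced {b : B} {ω : List B}
    (h : (b :: ω).length = D.cs.length (D.cs.wordProd (b :: ω))) :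
    ω.length = D.cs.length (D.cs.wordProd ω) := by
  have h1 := D.cs.length_wordProd_le ω
  have h2 : D.cs.length (D.cs.wordProd (b :: ω)) ≤ 1 + D.cs.length (D.cs.wordProd ω) := by
    rw [D.cs.wordProd_cons]
    calc D.cs.length (D.cs.simple b * D.cs.wordProd ω)
        ≤ D.cs.length (D.cs.simple b) + D.cs.length (D.cs.wordProd ω) := D.cs.length_mul_le _ _
      _ = 1 + D.cs.length (D.cs.wordProd ω) := by rw [D.cs.length_simple]
  simp only [List.length_cons] at h
  omega

lemma bruhat_le_cons {b : B} {ω : List B}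
    (hred : (b :: ω).length = D.cs.length (D.cs.wordProd (b :: ω)))
    {z : D.Waff} (hz : bruhatLE D.cs z (D.cs.wordProd ω)) :
    bruhatLE D.cs z (D.cs.wordProd (b :: ω)) ∧
      bruhatLE D.cs (D.cs.simple b * z) (D.cs.wordProd (b :: ω)) := by
  obtain ⟨ω₁, hprod, hlen, ω₂, hsub, hz2⟩ := hz
  have htail := D.tail_reduced hred
  have hp : D.cs.wordProd (b :: ω₁) = D.cs.wordProd (b :: ω) := by
    rw [D.cs.wordProd_cons, D.cs.wordProd_cons, hprod]
  have hl : (b :: ω₁).length = D.cs.length (D.cs.wordProd (b :: ω)) := by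
    simp only [List.length_cons, hlen, ← htail, ← hred]
  constructor
  · exact ⟨b :: ω₁, hp, hl, ω₂, hsub.trans (List.sublist_cons_self b ω₁), hz2⟩
  · exact ⟨b :: ω₁, hp, hl, b :: ω₂, hsub.cons₂ b,
      by rw [D.cs.wordProd_cons, hz2]⟩

lemma ext_cons {b : B} {ω : List B}
    (hred : (b :: ω).length = D.cs.length (D.cs.wordProd (b :: ω)))
    {z : W} {u : D.Om} (hz : extBruhatLE D z ((D.cs.wordProd ω : W) * (u : W))) :
    extBruhatLE D z ((D.cs.wordProd (b :: ω) : W) * (u : W)) ∧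
      extBruhatLE D (((D.cs.simple b : D.Waff) : W) * z)
        ((D.cs.wordProd (b :: ω) : W) * (u : W)) := by
  obtain ⟨za, ya, u0, hz1, hy1, hbr⟩ := hz
  obtain ⟨hya, hu0⟩ := D.decomp_unique hy1.symm
  subst hya hu0
  obtain ⟨le1, le2⟩ := D.bruhat_le_cons hred hbr
  constructor
  · exact ⟨za, D.cs.wordProd (b :: ω), u0, hz1, rfl, le1⟩
  · refine ⟨D.cs.simple b * za, D.cs.wordProd (b :: ω), u0, ?_, rfl, le2⟩
    rw [hz1]; push_cast; group

lemma extBruhatLE_refl (wa : D.Waff) (u : D.Om) :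
    extBruhatLE D ((wa : W) * (u : W)) ((wa : W) * (u : W)) := by
  obtain ⟨ω, hlen, hprod⟩ := D.cs.exists_reduced_word wa
  exact ⟨wa, wa, u, rfl, rfl, ω, hprod.symm, by rw [hprod]; exact hlen.symm, ω, List.Sublist.refl _, hprod.symm⟩

lemma conj_mem {n : D.N} (hn : D.π n ∈ D.Om) {k : G} (hk : k ∈ D.I) :
    (n : G)⁻¹ * k * (n : G) ∈ D.I := by
  have := D.TOm n⁻¹ (by rw [map_inv]; exact inv_mem hn) k hk
  simpa using this

lemma mul_om_subset (x : W) (u : D.Om) :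
    IwI D.I D.π x * IwI D.I D.π (u : W) ⊆ IwI D.I D.π (x * (u : W)) := by
  rintro g ⟨g1, ⟨nx, hnx, i, hi, j, hj, rfl⟩, g2, ⟨nu, hnu, i', hi', j', hj', rfl⟩, rfl⟩
  have hk : (nu : G)⁻¹ * (j * i') * (nu : G) ∈ D.I :=
    D.conj_mem (by rw [hnu]; exact u.2) (mul_mem hj hi')
  refine ⟨nx * nu, by rw [map_mul, hnx, hnu], i, hi,
    ((nu : G)⁻¹ * (j * i') * (nu : G)) * j', mul_mem hk hj', ?_⟩
  push_cast; group

lemma om_mul_subset (u : D.Om) (y : W) :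
    IwI D.I D.π (u : W) * IwI D.I D.π y ⊆ IwI D.I D.π ((u : W) * y) := by
  rintro g ⟨g1, ⟨nu, hnu, i, hi, j, hj, rfl⟩, g2, ⟨ny, hny, i', hi', j', hj', rfl⟩, rfl⟩
  have hk : ((nu : G) * (j * i') * (nu : G)⁻¹) ∈ D.I :=
    D.TOm nu (by rw [hnu]; exact u.2) _ (mul_mem hj hi')
  refine ⟨nu * ny, by rw [map_mul, hnu, hny], i * ((nu : G) * (j * i') * (nu : G)⁻¹),
    mul_mem hi hk, j', hj', ?_⟩
  push_cast; group

lemma main_right (ω : List B) (x : W) (u : D.Om)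
    (hred : ω.length = D.cs.length (D.cs.wordProd ω)) :
    IwI D.I D.π x * IwI D.I D.π ((D.cs.wordProd ω : W) * (u : W)) ⊆
      ⋃ z ∈ {z : W | extBruhatLE D z ((D.cs.wordProd ω : W) * (u : W))},
        IwI D.I D.π (x * z) := by
  induction ω generalizing x with
  | nil =>
    intro g hg
    have h1 : ((D.cs.wordProd [] : D.Waff) : W) = 1 := by
      rw [D.cs.wordProd_nil]; rfl
    refine Set.mem_biUnion (α := W) (s := {z : W | extBruhatLE D z _})
      (x := (D.cs.wordProd [] : W) * (u : W)) ?_ ?_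
    · exact D.extBruhatLE_refl _ u
    · rw [h1, one_mul] at hg ⊢
      exact D.mul_om_subset x u hg
  | cons b ω ih =>
    have htail := D.tail_reduced hred
    intro g hg
    obtain ⟨g1, hg1, g2, hg2, rfl⟩ := hg
    obtain ⟨nx, hnx, i1, hi1, j1, hj1, rfl⟩ := hg1
    obtain ⟨ns, hns⟩ := D.π_surjective ((D.cs.simple b : D.Waff) : W)
    obtain ⟨n', hn'⟩ := D.π_surjective ((D.cs.wordProd ω : W) * (u : W))
    have hnrep : D.π (ns * n') = (D.cs.wordProd (b :: ω) : W) * (u : W) := by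
      rw [map_mul, hns, hn', D.cs.wordProd_cons]
      push_cast; group
    rw [D.mem_IwI_iff_rep (ns * n') hnrep] at hg2
    obtain ⟨i2, hi2, j2, hj2, rfl⟩ := hg2
    have hT3 := D.T3r b x nx ns hnx hns (mul_mem hj1 hi2)
    have heq : i1 * (nx : G) * j1 * (i2 * ((ns * n' : D.N) : G) * j2) =
        i1 * ((nx : G) * (j1 * i2) * (ns : G)) * ((n' : G) * j2) := by
      push_cast; group
    have hmem : ∀ x' : W, (nx : G) * (j1 * i2) * (ns : G) ∈ IwI D.I D.π x' →
        i1 * ((nx : G) * (j1 * i2) * (ns : G)) * ((n' : G) * j2) ∈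
          ⋃ z ∈ {z : W | extBruhatLE D z ((D.cs.wordProd ω : W) * (u : W))},
            IwI D.I D.π (x' * z) := by
      intro x' hx'
      refine ih x' htail ?_
      exact ⟨i1 * ((nx : G) * (j1 * i2) * (ns : G)), D.IwI_mul_left hx' hi1,
        (n' : G) * j2, by
          rw [D.mem_IwI_iff_rep n' hn']
          exact ⟨1, one_mem _, j2, hj2, by group⟩, rfl⟩
    simp only at *
    rw [heq]
    rcases hT3 with h | h
    · obtain ⟨S, ⟨z, rfl⟩, hS⟩ := hmem x h
      obtain ⟨S', ⟨hz, rfl⟩, hgS⟩ := hS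
      exact Set.mem_biUnion (D.ext_cons hred hz).1 hgS
    · obtain ⟨S, ⟨z, rfl⟩, hS⟩ := hmem (x * ((D.cs.simple b : D.Waff) : W)) h
      obtain ⟨S', ⟨hz, rfl⟩, hgS⟩ := hS
      refine Set.mem_biUnion (D.ext_cons hred hz).2 ?_
      rwa [← mul_assoc]

lemma main_left (ω : List B) (y : W) (u : D.Om)
    (hred : ω.length = D.cs.length (D.cs.wordProd ω)) :
    IwI D.I D.π ((D.cs.wordProd ω : W) * (u : W)) * IwI D.I D.π y ⊆
      ⋃ z ∈ {z : W | extBruhatLE D z ((D.cs.wordProd ω : W) * (u : W))},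
        IwI D.I D.π (z * y) := by
  induction ω with
  | nil =>
    intro g hg
    have h1 : ((D.cs.wordProd [] : D.Waff) : W) = 1 := by
      rw [D.cs.wordProd_nil]; rfl
    refine Set.mem_biUnion (α := W) (s := {z : W | extBruhatLE D z _})
      (x := (D.cs.wordProd [] : W) * (u : W)) ?_ ?_
    · exact D.extBruhatLE_refl _ u
    · rw [h1, one_mul] at hg ⊢
      exact D.om_mul_subset u y hg
  | cons b ω ih =>
    have htail := D.tail_reduced hred
    intro g hg
    obtain ⟨g1, hg1, g2, hg2, rfl⟩ := hg
    obtain ⟨ns, hns⟩ := D.π_surjective ((D.cs.simple b : D.Waff) : W)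
    obtain ⟨n', hn'⟩ := D.π_surjective ((D.cs.wordProd ω : W) * (u : W))
    have hnrep : D.π (ns * n') = (D.cs.wordProd (b :: ω) : W) * (u : W) := by
      rw [map_mul, hns, hn', D.cs.wordProd_cons]
      push_cast; group
    rw [D.mem_IwI_iff_rep (ns * n') hnrep] at hg1
    obtain ⟨i1, hi1, j1, hj1, rfl⟩ := hg1
    have hinner : (n' : G) * j1 * g2 ∈
        ⋃ z ∈ {z : W | extBruhatLE D z ((D.cs.wordProd ω : W) * (u : W))},
          IwI D.I D.π (z * y) := by
      refine ih (htail) ⟨(n' : G) * j1, ?_, g2, hg2, rfl⟩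
      rw [D.mem_IwI_iff_rep n' hn']
      exact ⟨1, one_mem _, j1, hj1, by group⟩
    obtain ⟨S, ⟨z, rfl⟩, hS⟩ := hinner
    obtain ⟨S', ⟨hz, rfl⟩, hin⟩ := hS
    obtain ⟨nzy, hnzy, i2, hi2, j2, hj2, hin2⟩ := hin
    have heq : i1 * ((ns * n' : D.N) : G) * j1 * g2 =
        i1 * ((ns : G) * i2 * (nzy : G)) * j2 := by
      calc i1 * ((ns * n' : D.N) : G) * j1 * g2
          = i1 * (ns : G) * ((n' : G) * j1 * g2) := by push_cast; group
        _ = i1 * (ns : G) * (i2 * (nzy : G) * j2) := by rw [hin2]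
        _ = i1 * ((ns : G) * i2 * (nzy : G)) * j2 := by group
    have hT3 := D.T3 b (z * y) ns nzy hns hnzy i2 hi2
    simp only at *
    rw [heq]
    rcases hT3 with h | h
    · exact Set.mem_biUnion (D.ext_cons hred hz).1
        (D.IwI_mul_right (D.IwI_mul_left h hi1) hj2)
    · refine Set.mem_biUnion (D.ext_cons hred hz).2 ?_
      have := D.IwI_mul_right (D.IwI_mul_left h hi1) hj2
      rwa [← mul_assoc] at this

end IwahoriHeckeSetup

end Helpers

/-- For all `x, y ∈ W̃` one has `IxIyI ⊆ ⋃_{z ≤ y} IxzI` and `IxIyI ⊆ ⋃_{z ≤ x} IzyI`,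
where the unions run over `z ∈ W̃` with `z ≤ y` (resp. `z ≤ x`) in the extended Bruhat
order. -/
theorem IxIyI_subset_biUnion {G W B : Type} [Group G] [Group W]
    {M : CoxeterMatrix B} (D : IwahoriHeckeSetup G W B M) (x y : W) :
    IwI D.I D.π x * IwI D.I D.π y ⊆ ⋃ z ∈ {z : W | extBruhatLE D z y}, IwI D.I D.π (x * z) ∧
    IwI D.I D.π x * IwI D.I D.π y ⊆ ⋃ z ∈ {z : W | extBruhatLE D z x}, IwI D.I D.π (z * y) := by
  constructor
  · obtain ⟨wa, hwa, uu, huu, rfl⟩ := D.sd_prod y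
    obtain ⟨ω, hlen, hprod⟩ := D.cs.exists_reduced_word (⟨wa, hwa⟩ : D.Waff)
    have hcoe : (D.cs.wordProd ω : W) = wa := by rw [← hprod]
    have hred : ω.length = D.cs.length (D.cs.wordProd ω) := by exact hlen.symm
    have := D.main_right ω x ⟨uu, huu⟩ hred
    rwa [hcoe] at this
  · obtain ⟨wa, hwa, uu, huu, rfl⟩ := D.sd_prod x
    obtain ⟨ω, hlen, hprod⟩ := D.cs.exists_reduced_word (⟨wa, hwa⟩ : D.Waff)
    have hcoe : (D.cs.wordProd ω : W) = wa := by rw [← hprod]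
    have hred : ω.length = D.cs.length (D.cs.wordProd ω) := by exact hlen.symm
    have := D.main_left ω y ⟨uu, huu⟩ hred
    rwa [hcoe] at this
end

section
/- For w, w' ∈ W̃ the following are equivalent: (i) i_w ⋆ i_{w'} = i_{ww'} in H(G,I); (ii) Iww'I = IwIw'I as subsets of G; (iii) ℓ(w) + ℓ(w') = ℓ(ww'); (iv) q_w·q_{w'} = q_{ww'}. -/
open scoped Pointwise

namespace IwahoriHeckeSetup

open Set Pointwise

variable {G W B : Type} [Group G] [Group W] {M : CoxeterMatrix B}
variable (D : IwahoriHeckeSetup G W B M)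

/-- abbreviation for the double coset -/
abbrev C (w : W) : Set G := IwI D.I D.π w

/-- the simple reflection as an element of `W̃` -/
abbrev sW (b : B) : W := ((D.cs.simple b : D.Waff) : W)

noncomputable def rep (w : W) : D.N := Function.surjInv D.π_surjective w

@[simp] lemma π_rep (w : W) : D.π (D.rep w) = w := Function.surjInv_eq D.π_surjective w

lemma mem_C_iff {w : W} {g : G} {n : D.N} (hn : D.π n = w) :
    g ∈ D.C w ↔ ∃ i ∈ D.I, ∃ j ∈ D.I, g = i * (n : G) * j := by
  constructor
  · rintro ⟨n', hn', i, hi, j, hj, rfl⟩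
    have h1 : D.π (n⁻¹ * n') = 1 := by rw [map_mul, map_inv, hn, hn', inv_mul_cancel]
    have h2 : ((n⁻¹ * n' : D.N) : G) ∈ D.I := (D.π_ker _).1 h1
    refine ⟨i, hi, ((n⁻¹ * n' : D.N) : G) * j, mul_mem h2 hj, ?_⟩
    push_cast
    group
  · rintro ⟨i, hi, j, hj, rfl⟩
    exact ⟨n, hn, i, hi, j, hj, rfl⟩

lemma rep_mem_C (w : W) : ((D.rep w : G)) ∈ D.C w :=
  ⟨D.rep w, D.π_rep w, 1, one_mem _, 1, one_mem _, by group⟩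

lemma C_nonempty (w : W) : (D.C w).Nonempty := ⟨_, D.rep_mem_C w⟩

lemma mul_mem_C_left {w : W} {g : G} (hg : g ∈ D.C w) {i : G} (hi : i ∈ D.I) :
    i * g ∈ D.C w := by
  obtain ⟨n, hn, a, ha, b, hb, rfl⟩ := hg
  exact ⟨n, hn, i * a, mul_mem hi ha, b, hb, by group⟩

lemma mul_mem_C_right {w : W} {g : G} (hg : g ∈ D.C w) {j : G} (hj : j ∈ D.I) :
    g * j ∈ D.C w := by
  obtain ⟨n, hn, a, ha, b, hb, rfl⟩ := hg
  exact ⟨n, hn, a, ha, b * j, mul_mem hb hj, by group⟩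

lemma C_one : D.C 1 = (D.I : Set G) := by
  ext g
  rw [D.mem_C_iff (n := 1) (map_one D.π)]
  constructor
  · rintro ⟨i, hi, j, hj, rfl⟩
    simpa using mul_mem hi hj
  · intro hg
    exact ⟨g, hg, 1, one_mem _, by simp⟩

lemma C_subset_of_mem {w : W} {A : Set G}
    (hl : ∀ i ∈ D.I, ∀ g ∈ A, i * g ∈ A) (hr : ∀ j ∈ D.I, ∀ g ∈ A, g * j ∈ A)
    {g : G} (hg : g ∈ D.C w) (hgA : g ∈ A) : D.C w ⊆ A := by
  intro h hh
  rw [D.mem_C_iff (D.π_rep w)] at hg hh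
  obtain ⟨i, hi, j, hj, hgr⟩ := hg
  obtain ⟨a, ha, b, hb, rfl⟩ := hh
  have : a * (↑(D.rep w) : G) * b = (a * i⁻¹) * (i * ↑(D.rep w) * j) * (j⁻¹ * b) := by group
  rw [this, ← hgr]
  exact hr _ (mul_mem (inv_mem hj) hb) _ (hl _ (mul_mem ha (inv_mem hi)) _ hgA)

lemma C_mul_C_supset (w w' : W) : D.C (w * w') ⊆ D.C w * D.C w' := by
  intro g hg
  rw [D.mem_C_iff (n := D.rep w * D.rep w') (by simp)] at hg
  obtain ⟨i, hi, j, hj, rfl⟩ := hg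
  exact ⟨i * ↑(D.rep w), D.mul_mem_C_left (D.rep_mem_C w) hi,
    ↑(D.rep w') * j, D.mul_mem_C_right (D.rep_mem_C w') hj, by push_cast; group⟩

lemma mem_C_inv {w : W} {g : G} : g ∈ D.C w ↔ g⁻¹ ∈ D.C w⁻¹ := by
  rw [D.mem_C_iff (D.π_rep w), D.mem_C_iff (n := (D.rep w)⁻¹) (by simp)]
  constructor
  · rintro ⟨i, hi, j, hj, rfl⟩
    exact ⟨j⁻¹, inv_mem hj, i⁻¹, inv_mem hi, by push_cast; group⟩
  · rintro ⟨i, hi, j, hj, hk⟩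
    refine ⟨j⁻¹, inv_mem hj, i⁻¹, inv_mem hi, ?_⟩
    have hg : g = (i * (↑((D.rep w)⁻¹) : G) * j)⁻¹ := by
      rw [← hk]; group
    rw [hg]; push_cast; group

lemma CsC_subset (b : B) (w : W) :
    D.C (D.sW b) * D.C w ⊆ D.C w ∪ D.C (D.sW b * w) := by
  rintro x ⟨g, hg, h, hh, rfl⟩
  rw [D.mem_C_iff (D.π_rep (D.sW b))] at hg
  obtain ⟨i, hi, j, hj, rfl⟩ := hg
  rw [D.mem_C_iff (D.π_rep w)] at hh
  obtain ⟨a, ha, c, hc, rfl⟩ := hh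
  have key := D.T3 b w (D.rep (D.sW b)) (D.rep w) (D.π_rep _) (D.π_rep _) (j * a) (mul_mem hj ha)
  show i * ↑(D.rep (D.sW b)) * j * (a * ↑(D.rep w) * c) ∈ _
  have heq : i * (↑(D.rep (D.sW b)) : G) * j * (a * ↑(D.rep w) * c)
      = i * (↑(D.rep (D.sW b)) * (j * a) * ↑(D.rep w)) * c := by group
  rw [heq]
  rcases key with hk | hk
  · exact Or.inl (D.mul_mem_C_right (D.mul_mem_C_left hk hi) hc)
  · exact Or.inr (D.mul_mem_C_right (D.mul_mem_C_left hk hi) hc)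

lemma sW_mul_self (b : B) : D.sW b * D.sW b = 1 := by
  have h := D.cs.simple_mul_simple_self b
  have := congrArg (fun x : D.Waff => (x : W)) h
  push_cast at this
  simpa using this

lemma sW_inv (b : B) : (D.sW b)⁻¹ = D.sW b :=
  inv_eq_of_mul_eq_one_right (D.sW_mul_self b)

lemma CCs_subset (b : B) (w : W) :
    D.C w * D.C (D.sW b) ⊆ D.C w ∪ D.C (w * D.sW b) := by
  rintro x ⟨g, hg, h, hh, rfl⟩
  have h1 : h⁻¹ ∈ D.C (D.sW b) := by
    rw [← D.sW_inv b]; exact D.mem_C_inv.mp hh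
  have h2 : g⁻¹ ∈ D.C w⁻¹ := D.mem_C_inv.mp hg
  have h3 : h⁻¹ * g⁻¹ ∈ D.C w⁻¹ ∪ D.C (D.sW b * w⁻¹) :=
    D.CsC_subset b w⁻¹ ⟨h⁻¹, h1, g⁻¹, h2, rfl⟩
  rcases h3 with hk | hk
  · left
    have := D.mem_C_inv.mp hk
    show g * h ∈ _
    simpa using this
  · right
    have := D.mem_C_inv.mp hk
    show g * h ∈ _
    simpa [mul_inv_rev, D.sW_inv] using this

lemma mem_C_om_iff_left {u : W} (hu : u ∈ D.Om) {g : G} :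
    g ∈ D.C u ↔ ∃ i ∈ D.I, g = i * ↑(D.rep u) := by
  rw [D.mem_C_iff (D.π_rep u)]
  constructor
  · rintro ⟨i, hi, j, hj, rfl⟩
    exact ⟨i * (↑(D.rep u) * j * (↑(D.rep u) : G)⁻¹),
      mul_mem hi (D.TOm _ (by simpa using hu) j hj), by group⟩
  · rintro ⟨i, hi, rfl⟩
    exact ⟨i, hi, 1, one_mem _, by group⟩

lemma C_om_mul_C {u : W} (hu : u ∈ D.Om) (w : W) : D.C u * D.C w = D.C (u * w) := by
  apply subset_antisymm
  · rintro x ⟨g, hg, h, hh, rfl⟩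
    rw [D.mem_C_om_iff_left hu] at hg
    obtain ⟨i, hi, rfl⟩ := hg
    rw [D.mem_C_iff (D.π_rep w)] at hh
    obtain ⟨a, ha, c, hc, rfl⟩ := hh
    have hmem : ((↑(D.rep u) : G) * a * (↑(D.rep u) : G)⁻¹) ∈ D.I :=
      D.TOm _ (by simpa using hu) a ha
    exact (D.mem_C_iff (n := D.rep u * D.rep w) (by simp)).mpr
      ⟨i * ((↑(D.rep u) : G) * a * (↑(D.rep u) : G)⁻¹), mul_mem hi hmem, c, hc,
        by push_cast; group⟩
  · exact D.C_mul_C_supset u w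

lemma C_mul_C_om {u : W} (hu : u ∈ D.Om) (w : W) : D.C w * D.C u = D.C (w * u) := by
  apply subset_antisymm
  · rintro x ⟨g, hg, h, hh, rfl⟩
    rw [D.mem_C_iff (D.π_rep w)] at hg
    obtain ⟨i, hi, j, hj, rfl⟩ := hg
    rw [D.mem_C_om_iff_left hu] at hh
    obtain ⟨a, ha, rfl⟩ := hh
    have hmem : ((↑(D.rep u) : G)⁻¹ * (j * a) * (↑(D.rep u) : G)) ∈ D.I := by
      have := D.TOm (D.rep u)⁻¹ (by simpa using inv_mem hu) (j * a) (mul_mem hj ha)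
      simpa using this
    exact (D.mem_C_iff (n := D.rep w * D.rep u) (by simp)).mpr
      ⟨i, hi, (↑(D.rep u) : G)⁻¹ * (j * a) * (↑(D.rep u) : G), hmem, by push_cast; group⟩
  · exact D.C_mul_C_supset w u

end IwahoriHeckeSetup

namespace IwahoriHeckeSetup

variable {G W B : Type} [Group G] [Group W] {M : CoxeterMatrix B}
variable (D : IwahoriHeckeSetup G W B M)

lemma decomp (w : W) : ∃ (a : D.Waff) (u : D.Om), w = (a : W) * (u : W) := by
  obtain ⟨a, ha, u, hu, rfl⟩ := D.sd_prod w
  exact ⟨⟨a, ha⟩, ⟨u, hu⟩, rfl⟩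

lemma len_waff (a : D.Waff) : D.len (a : W) = D.cs.length a := by
  have := D.len_spec a 1
  simpa using this

lemma len_om {u : W} (hu : u ∈ D.Om) : D.len u = 0 := by
  have := D.len_spec 1 ⟨u, hu⟩
  simpa using this

lemma len_one : D.len 1 = 0 := D.len_om (one_mem _)

lemma conj_mem_waff {u : W} (hu : u ∈ D.Om) (a : D.Waff) : u * (a : W) * u⁻¹ ∈ D.Waff :=
  D.Waff_normal.conj_mem _ a.2 u

lemma length_conj_le (u : D.Om) : ∀ n (a a' : D.Waff), D.cs.length a = n →
    (a' : W) = (u : W) * (a : W) * (u : W)⁻¹ → D.cs.length a' ≤ n := by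
  intro n
  induction n with
  | zero =>
    intro a a' ha h
    have ha1 : a = 1 := D.cs.length_eq_zero_iff.mp ha
    subst ha1
    have h1 : (a' : W) = 1 := by simpa using h
    have h2 : a' = 1 := by exact_mod_cast h1
    simp [h2]
  | succ n ih =>
    intro a a' ha h
    have hne : a ≠ 1 := by
      intro h1; rw [h1] at ha; simp at ha
    obtain ⟨b, hb⟩ := D.cs.exists_leftDescent_of_ne_one hne
    have hb' : D.cs.length (D.cs.simple b * a) + 1 = D.cs.length a :=
      D.cs.isLeftDescent_iff.mp hb
    set a₂ := D.cs.simple b * a with ha₂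
    have ha2len : D.cs.length a₂ = n := by omega
    obtain ⟨b', hb'eq⟩ := D.TS (u : W) u.2 b
    have hmem := D.conj_mem_waff u.2 a₂
    set a₂' : D.Waff := ⟨(u : W) * (a₂ : W) * (u : W)⁻¹, hmem⟩ with ha₂'
    have h2 : D.cs.length a₂' ≤ n := ih a₂ a₂' ha2len rfl
    have haeq : D.cs.simple b * a₂ = a := by
      rw [ha₂]; exact D.cs.simple_mul_simple_cancel_left b
    have key : a' = D.cs.simple b' * a₂' := by
      apply Subtype.coe_injective
      rw [ha₂']
      push_cast
      rw [h, ← haeq]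
      push_cast
      rw [← hb'eq]
      group
    rw [key]
    calc D.cs.length (D.cs.simple b' * a₂') ≤ D.cs.length a₂' + 1 := by
          have := D.cs.length_mul_le (D.cs.simple b') a₂'
          rw [D.cs.length_simple] at this
          omega
    _ ≤ n + 1 := by omega

lemma length_conj (u : D.Om) (a a' : D.Waff)
    (h : (a' : W) = (u : W) * (a : W) * (u : W)⁻¹) : D.cs.length a' = D.cs.length a := by
  have h1 : D.cs.length a' ≤ D.cs.length a := D.length_conj_le u _ a a' rfl h
  have h2 : (a : W) = ((u⁻¹ : D.Om) : W) * (a' : W) * ((u⁻¹ : D.Om) : W)⁻¹ := by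
    push_cast
    rw [h]; group
  have h3 := D.length_conj_le u⁻¹ _ a' a rfl h2
  omega

lemma len_om_mul {u : W} (hu : u ∈ D.Om) (w : W) : D.len (u * w) = D.len w := by
  obtain ⟨a, v, rfl⟩ := D.decomp w
  have hmem := D.conj_mem_waff hu a
  set a' : D.Waff := ⟨u * a * u⁻¹, hmem⟩ with ha'
  have hprod : u * ((a : W) * (v : W)) = (a' : W) * (((⟨u, hu⟩ : D.Om) * v : D.Om) : W) := by
    rw [ha']; push_cast; group
  rw [hprod, D.len_spec, D.len_spec, D.length_conj ⟨u, hu⟩ a a' rfl]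

lemma len_mul_om {u : W} (hu : u ∈ D.Om) (w : W) : D.len (w * u) = D.len w := by
  obtain ⟨a, v, rfl⟩ := D.decomp w
  have hprod : (a : W) * (v : W) * u = (a : W) * ((v * ⟨u, hu⟩ : D.Om) : W) := by
    push_cast; group
  rw [hprod, D.len_spec, D.len_spec]

lemma len_inv (w : W) : D.len w⁻¹ = D.len w := by
  obtain ⟨a, v, rfl⟩ := D.decomp w
  have hmem := D.conj_mem_waff (inv_mem v.2) (a⁻¹)
  set a' : D.Waff := ⟨(v : W)⁻¹ * ((a⁻¹ : D.Waff) : W) * ((v : W)⁻¹)⁻¹, hmem⟩ with ha'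
  have hprod : ((a : W) * (v : W))⁻¹ = (a' : W) * ((v⁻¹ : D.Om) : W) := by
    rw [ha']; push_cast; group
  rw [hprod, D.len_spec, D.len_spec,
    D.length_conj v⁻¹ a⁻¹ a' (by rw [ha']; push_cast; group)]
  exact D.cs.length_inv a

lemma len_mul_le (x y : W) : D.len (x * y) ≤ D.len x + D.len y := by
  obtain ⟨a, u, rfl⟩ := D.decomp x
  obtain ⟨b, v, rfl⟩ := D.decomp y
  have hmem := D.conj_mem_waff u.2 b
  set b' : D.Waff := ⟨u * b * u⁻¹, hmem⟩ with hb'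
  have hprod : (a : W) * u * ((b : W) * v)
      = ((a * b' : D.Waff) : W) * ((u * v : D.Om) : W) := by
    rw [hb']; push_cast; group
  rw [hprod, D.len_spec, D.len_spec, D.len_spec]
  calc D.cs.length (a * b') ≤ D.cs.length a + D.cs.length b' := D.cs.length_mul_le a b'
  _ = D.cs.length a + D.cs.length b := by rw [D.length_conj u b b' rfl]

lemma len_sW (b : B) : D.len (D.sW b) = 1 := by
  rw [D.len_waff]; exact D.cs.length_simple b

lemma sW_ne_one (b : B) : D.sW b ≠ 1 := by
  intro h
  have h1 := D.len_sW b
  rw [h, D.len_one] at h1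
  omega

lemma sW_mul_cancel (b : B) (w : W) : D.sW b * (D.sW b * w) = w := by
  rw [← mul_assoc, D.sW_mul_self, one_mul]

lemma len_sW_mul (b : B) (w : W) :
    D.len (D.sW b * w) = D.len w + 1 ∨ D.len (D.sW b * w) + 1 = D.len w := by
  obtain ⟨a, u, rfl⟩ := D.decomp w
  have hprod : D.sW b * ((a : W) * u) = ((D.cs.simple b * a : D.Waff) : W) * (u : W) := by
    push_cast; group
  rw [hprod, D.len_spec, D.len_spec]
  exact D.cs.length_simple_mul a b

lemma exists_left_descent {w : W} (hw : D.len w ≠ 0) :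
    ∃ b : B, D.len (D.sW b * w) + 1 = D.len w := by
  obtain ⟨a, u, rfl⟩ := D.decomp w
  rw [D.len_spec] at hw
  have ha : a ≠ 1 := fun h => hw (by simp [h])
  obtain ⟨b, hb⟩ := D.cs.exists_leftDescent_of_ne_one ha
  refine ⟨b, ?_⟩
  have hprod : D.sW b * ((a : W) * u) = ((D.cs.simple b * a : D.Waff) : W) * (u : W) := by
    push_cast; group
  rw [hprod, D.len_spec, D.len_spec]
  exact D.cs.isLeftDescent_iff.mp hb

lemma exists_right_descent {w : W} (hw : D.len w ≠ 0) :
    ∃ b : B, D.len (w * D.sW b) + 1 = D.len w := by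
  obtain ⟨a, u, rfl⟩ := D.decomp w
  rw [D.len_spec] at hw
  have ha : a ≠ 1 := fun h => hw (by simp [h])
  obtain ⟨b', hb'⟩ := D.cs.exists_rightDescent_of_ne_one ha
  obtain ⟨b, hb⟩ := D.TS ((u : W)⁻¹) (inv_mem u.2) b'
  refine ⟨b, ?_⟩
  have hb2 : D.sW b = ((u : W))⁻¹ * ((D.cs.simple b' : D.Waff) : W) * (((u : W))⁻¹)⁻¹ :=
    hb.symm
  have hprod : (a : W) * u * D.sW b = ((a * D.cs.simple b' : D.Waff) : W) * (u : W) := by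
    rw [hb2]
    push_cast
    group
  rw [hprod, D.len_spec, D.len_spec]
  exact D.cs.isRightDescent_iff.mp hb'

lemma len_zero_iff {w : W} : D.len w = 0 ↔ w ∈ D.Om := by
  constructor
  · intro h
    obtain ⟨a, u, rfl⟩ := D.decomp w
    rw [D.len_spec] at h
    have ha : a = 1 := D.cs.length_eq_zero_iff.mp h
    rw [ha]
    simpa using u.2
  · exact D.len_om

lemma sandwich {b : B} {v w' : W} (h : D.len (D.sW b * v * w') = D.len v + 1 + D.len w') :
    D.len (v * w') = D.len v + D.len w' ∧
    D.len (D.sW b * (v * w')) = D.len (v * w') + 1 := by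
  have h1 : D.len (D.sW b * (v * w')) ≤ D.len (v * w') + 1 := by
    have := D.len_mul_le (D.sW b) (v * w')
    rw [D.len_sW] at this
    omega
  have h2 : D.len (v * w') ≤ D.len v + D.len w' := D.len_mul_le v w'
  have h3 : D.sW b * v * w' = D.sW b * (v * w') := by group
  rw [h3] at h
  constructor <;> omega

end IwahoriHeckeSetup

namespace IwahoriHeckeSetup

open Set Pointwise

variable {G W B : Type} [Group G] [Group W] {M : CoxeterMatrix B}
variable (D : IwahoriHeckeSetup G W B M)


lemma sW_shift (b : B) (x y : W) : D.sW b * (D.sW b * x * y) = x * y := by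
  rw [← mul_assoc, ← mul_assoc, D.sW_mul_self, one_mul]

lemma C_sW_sq (b : B) : D.C (D.sW b) * D.C (D.sW b) = D.C 1 ∪ D.C (D.sW b) := by
  have hsub : D.C (D.sW b) * D.C (D.sW b) ⊆ D.C 1 ∪ D.C (D.sW b) := by
    rw [Set.union_comm]
    have h := D.CsC_subset b (D.sW b)
    rwa [D.sW_mul_self] at h
  apply subset_antisymm hsub
  have hrepinv : ((D.rep (D.sW b) : G))⁻¹ ∈ D.C (D.sW b) := by
    have := D.mem_C_inv.mp (D.rep_mem_C (D.sW b))
    rwa [D.sW_inv] at this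
  intro x hx
  rcases hx with hx | hx
  · rw [D.C_one] at hx
    exact ⟨x * ↑(D.rep (D.sW b)), D.mul_mem_C_left (D.rep_mem_C _) hx,
      (↑(D.rep (D.sW b)) : G)⁻¹, hrepinv, by group⟩
  · have h4 := D.T4 b (D.rep (D.sW b)) (D.rep (D.sW b)) (D.π_rep _) (D.π_rep _)
    push_neg at h4
    obtain ⟨i₀, hi₀, hni⟩ := h4
    have hg₀mem : (↑(D.rep (D.sW b)) : G) * i₀ * ↑(D.rep (D.sW b))
        ∈ D.C (D.sW b) * D.C (D.sW b) :=
      ⟨↑(D.rep (D.sW b)) * i₀, D.mul_mem_C_right (D.rep_mem_C _) hi₀,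
        ↑(D.rep (D.sW b)), D.rep_mem_C _, by group⟩
    have hg₀s : (↑(D.rep (D.sW b)) : G) * i₀ * ↑(D.rep (D.sW b)) ∈ D.C (D.sW b) := by
      rcases hsub hg₀mem with h | h
      · exact absurd (by rwa [D.C_one] at h) hni
      · exact h
    refine D.C_subset_of_mem ?_ ?_ hg₀s hg₀mem hx
    · rintro i hi g ⟨p, hp, r, hr, rfl⟩
      exact ⟨i * p, D.mul_mem_C_left hp hi, r, hr, by group⟩
    · rintro j hj g ⟨p, hp, r, hr, rfl⟩
      exact ⟨p, hp, r * j, D.mul_mem_C_right hr hj, by group⟩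

lemma C_mul_C_inv_eq {x y z : W} (h : D.C x * D.C y = D.C z) :
    D.C y⁻¹ * D.C x⁻¹ = D.C z⁻¹ := by
  ext g
  constructor
  · rintro ⟨p, hp, r, hr, rfl⟩
    have hp' : p⁻¹ ∈ D.C y := by simpa using D.mem_C_inv.mp hp
    have hr' : r⁻¹ ∈ D.C x := by simpa using D.mem_C_inv.mp hr
    have hmem : (p * r)⁻¹ ∈ D.C z := by
      rw [← h]
      exact ⟨r⁻¹, hr', p⁻¹, hp', by group⟩
    have := (D.mem_C_inv (w := z⁻¹) (g := p * r))
    rw [inv_inv] at this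
    exact this.mpr hmem
  · intro hg
    have hg' : g⁻¹ ∈ D.C z := by simpa using D.mem_C_inv.mp hg
    rw [← h] at hg'
    obtain ⟨p, hp, r, hr, hpr⟩ := hg'
    have hgr : g = r⁻¹ * p⁻¹ := by rw [← inv_inv g, ← hpr]; group
    rw [hgr]
    exact ⟨r⁻¹, D.mem_C_inv.mp hr, p⁻¹, D.mem_C_inv.mp hp, rfl⟩

lemma CsC_eq : ∀ n (w : W) (b : B), D.len w = n → D.len (D.sW b * w) = n + 1 →
    D.C (D.sW b) * D.C w = D.C (D.sW b * w) := by
  intro n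
  induction n with
  | zero =>
    intro w b hw _
    exact D.C_mul_C_om (D.len_zero_iff.mp hw) (D.sW b)
  | succ n ih =>
    intro w b hw hsw
    obtain ⟨b', hb'⟩ := D.exists_right_descent (w := w) (by omega)
    have hvt : (w * D.sW b') * D.sW b' = w := by
      rw [mul_assoc, D.sW_mul_self, mul_one]
    have hlenv : D.len (w * D.sW b') = n := by omega
    have hassoc : D.sW b * (w * D.sW b') * D.sW b' = D.sW b * w := by
      rw [mul_assoc, mul_assoc, D.sW_mul_self, mul_one]
    have h1 : D.len (D.sW b * (w * D.sW b')) ≤ n + 1 := by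
      have := D.len_mul_le (D.sW b) (w * D.sW b')
      rw [D.len_sW] at this
      omega
    have h2 : D.len (D.sW b * (w * D.sW b')) = n + 1 := by
      have h4 := D.len_mul_le (D.sW b * (w * D.sW b')) (D.sW b')
      rw [D.len_sW, hassoc, hsw] at h4
      omega
    have hA : D.C (D.sW b) * D.C (w * D.sW b') = D.C (D.sW b * (w * D.sW b')) :=
      ih (w * D.sW b') b hlenv h2
    have hAr : D.C (w * D.sW b') * D.C (D.sW b') = D.C w := by
      have hinv1 : D.len (w * D.sW b')⁻¹ = n := by rw [D.len_inv]; exact hlenv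
      have heq1 : D.sW b' * (w * D.sW b')⁻¹ = w⁻¹ := by
        rw [mul_inv_rev, ← mul_assoc, D.sW_inv, D.sW_mul_self, one_mul]
      have hlen2 : D.len (D.sW b' * (w * D.sW b')⁻¹) = n + 1 := by
        rw [heq1, D.len_inv]
        omega
      have hx := ih (w * D.sW b')⁻¹ b' hinv1 hlen2
      have hy := D.C_mul_C_inv_eq hx
      rw [heq1] at hy
      rw [inv_inv, D.sW_inv b', inv_inv] at hy
      exact hy
    apply subset_antisymm
    · intro x hxmem
      have hx1 : x ∈ D.C w ∪ D.C (D.sW b * w) := D.CsC_subset b w hxmem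
      have hx2 : x ∈ D.C (D.sW b * (w * D.sW b')) ∪ D.C (D.sW b * w) := by
        have hxm2 : x ∈ D.C (D.sW b * (w * D.sW b')) * D.C (D.sW b') := by
          rw [← hA, mul_assoc, hAr]
          exact hxmem
        rcases D.CCs_subset b' (D.sW b * (w * D.sW b')) hxm2 with h | h
        · exact Or.inl h
        · refine Or.inr ?_
          have heq2 : D.sW b * (w * D.sW b') * D.sW b' = D.sW b * w := hassoc
          rwa [heq2] at h
      rcases hx1 with hx1 | hx1
      · rcases hx2 with hx2 | hx2
        · exfalso
          have hne : w ≠ D.sW b * (w * D.sW b') := by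
            intro hEq
            have h5 : D.sW b * w = w * D.sW b' := by
              conv_lhs => rw [hEq, D.sW_mul_cancel]
            rw [h5, hlenv] at hsw
            omega
          exact Set.disjoint_left.mp (D.T0_disjoint w (D.sW b * (w * D.sW b')) hne) hx1 hx2
        · exact hx2
      · exact hx1
    · exact D.C_mul_C_supset (D.sW b) w

lemma CsC_eq_union (b : B) (z : W) (h : D.len (D.sW b * z) + 1 = D.len z) :
    D.C (D.sW b) * D.C z = D.C (D.sW b * z) ∪ D.C z := by
  have hz : D.sW b * (D.sW b * z) = z := D.sW_mul_cancel b z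
  have hA : D.C (D.sW b) * D.C (D.sW b * z) = D.C z := by
    have := D.CsC_eq (D.len (D.sW b * z)) (D.sW b * z) b rfl (by rw [hz]; omega)
    rwa [hz] at this
  calc D.C (D.sW b) * D.C z
      = D.C (D.sW b) * (D.C (D.sW b) * D.C (D.sW b * z)) := by rw [hA]
  _ = (D.C (D.sW b) * D.C (D.sW b)) * D.C (D.sW b * z) := by rw [mul_assoc]
  _ = (D.C 1 ∪ D.C (D.sW b)) * D.C (D.sW b * z) := by rw [D.C_sW_sq]
  _ = D.C 1 * D.C (D.sW b * z) ∪ D.C (D.sW b) * D.C (D.sW b * z) := by rw [Set.union_mul]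
  _ = D.C (D.sW b * z) ∪ D.C z := by
      rw [D.C_om_mul_C (one_mem _) (D.sW b * z), one_mul, hA]

lemma prod_eq_of_len_add : ∀ n (w w' : W), D.len w = n →
    D.len w + D.len w' = D.len (w * w') → D.C w * D.C w' = D.C (w * w') := by
  intro n
  induction n with
  | zero =>
    intro w w' hw _
    exact D.C_om_mul_C (D.len_zero_iff.mp hw) w'
  | succ n ih =>
    intro w w' hw hadd
    obtain ⟨b, hb⟩ := D.exists_left_descent (w := w) (by omega)
    have hwv : D.sW b * (D.sW b * w) = w := D.sW_mul_cancel b w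
    have hlenv : D.len (D.sW b * w) = n := by omega
    obtain ⟨h1, h2⟩ := D.sandwich (b := b) (v := D.sW b * w) (w' := w') (by rw [hwv]; omega)
    have hIH : D.C (D.sW b * w) * D.C w' = D.C (D.sW b * w * w') :=
      ih (D.sW b * w) w' hlenv (by omega)
    have hA1 : D.C w = D.C (D.sW b) * D.C (D.sW b * w) := by
      have := D.CsC_eq n (D.sW b * w) b hlenv (by rw [hwv]; omega)
      rw [hwv] at this
      exact this.symm
    calc D.C w * D.C w' = (D.C (D.sW b) * D.C (D.sW b * w)) * D.C w' := by rw [← hA1]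
    _ = D.C (D.sW b) * (D.C (D.sW b * w) * D.C w') := by rw [mul_assoc]
    _ = D.C (D.sW b) * D.C (D.sW b * w * w') := by rw [hIH]
    _ = D.C (D.sW b * (D.sW b * w * w')) :=
        D.CsC_eq (D.len (D.sW b * w * w')) (D.sW b * w * w') b rfl
          (by omega)
    _ = D.C (w * w') := by rw [D.sW_shift]

lemma exists_extra_coset : ∀ n (w w' : W), D.len w = n →
    D.len (w * w') < D.len w + D.len w' →
    ∃ x, x ≠ w * w' ∧ D.C x ⊆ D.C w * D.C w' := by
  intro n
  induction n with
  | zero =>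
    intro w w' hw hlt
    exfalso
    rw [D.len_om_mul (D.len_zero_iff.mp hw)] at hlt
    omega
  | succ n ih =>
    intro w w' hw hlt
    obtain ⟨b, hb⟩ := D.exists_left_descent (w := w) (by omega)
    have hwv : D.sW b * (D.sW b * w) = w := D.sW_mul_cancel b w
    have hlenv : D.len (D.sW b * w) = n := by omega
    have hA1 : D.C (D.sW b) * D.C (D.sW b * w) = D.C w := by
      have := D.CsC_eq n (D.sW b * w) b hlenv (by rw [hwv]; omega)
      rwa [hwv] at this
    have hsvw : D.sW b * (D.sW b * w * w') = w * w' := D.sW_shift b w w'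
    by_cases hcase : D.len (D.sW b * w * w') = D.len (D.sW b * w) + D.len w'
    · have hsz : D.len (D.sW b * (D.sW b * w * w')) + 1 = D.len (D.sW b * w * w') := by
        rcases D.len_sW_mul b (D.sW b * w * w') with h | h
        · exfalso
          rw [hsvw] at h
          omega
        · exact h
      have hB := D.CsC_eq_union b (D.sW b * w * w') hsz
      rw [hsvw] at hB
      refine ⟨D.sW b * w * w', ?_, ?_⟩
      · intro hEq
        rw [hsvw] at hsz
        rw [hEq] at hsz
        omega
      · calc D.C (D.sW b * w * w')
            ⊆ D.C (w * w') ∪ D.C (D.sW b * w * w') := Set.subset_union_right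
        _ = D.C (D.sW b) * D.C (D.sW b * w * w') := hB.symm
        _ ⊆ D.C (D.sW b) * (D.C (D.sW b * w) * D.C w') :=
            Set.mul_subset_mul_left (D.C_mul_C_supset (D.sW b * w) w')
        _ = (D.C (D.sW b) * D.C (D.sW b * w)) * D.C w' := by rw [mul_assoc]
        _ = D.C w * D.C w' := by rw [hA1]
    · have hlt' : D.len (D.sW b * w * w') < D.len (D.sW b * w) + D.len w' := by
        have := D.len_mul_le (D.sW b * w) w'
        omega
      obtain ⟨x, hx, hsub⟩ := ih (D.sW b * w) w' hlenv hlt'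
      refine ⟨D.sW b * x, ?_, ?_⟩
      · intro hEq
        apply hx
        have h6 : x = D.sW b * (w * w') := by
          rw [← D.sW_mul_cancel b x, hEq]
        rw [h6, ← mul_assoc]
      · calc D.C (D.sW b * x) ⊆ D.C (D.sW b) * D.C x := D.C_mul_C_supset _ _
        _ ⊆ D.C (D.sW b) * (D.C (D.sW b * w) * D.C w') := Set.mul_subset_mul_left hsub
        _ = (D.C (D.sW b) * D.C (D.sW b * w)) * D.C w' := by rw [mul_assoc]
        _ = D.C w * D.C w' := by rw [hA1]

lemma len_add_of_prod_eq {w w' : W} (h : D.C w * D.C w' = D.C (w * w')) :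
    D.len w + D.len w' = D.len (w * w') := by
  by_contra hne
  have hlt : D.len (w * w') < D.len w + D.len w' :=
    lt_of_le_of_ne (D.len_mul_le w w') (Ne.symm hne)
  obtain ⟨x, hx, hsub⟩ := D.exists_extra_coset (D.len w) w w' rfl hlt
  have hmem : (↑(D.rep x) : G) ∈ D.C (w * w') := by
    rw [← h]
    exact hsub (D.rep_mem_C x)
  exact Set.disjoint_left.mp (D.T0_disjoint x (w * w') hx) (D.rep_mem_C x) hmem

end IwahoriHeckeSetup

namespace IwahoriHeckeSetup

open Set Pointwise

variable {G W B : Type} [Group G] [Group W] {M : CoxeterMatrix B}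

lemma mk_mul_right_mem {G : Type} [Group G] {I : Subgroup G} {i : G} (hi : i ∈ I) (a : G) :
    (QuotientGroup.mk (a * i) : G ⧸ I) = QuotientGroup.mk a := by
  apply (QuotientGroup.eq).mpr
  have h : (a * i)⁻¹ * a = i⁻¹ := by group
  rw [h]
  exact inv_mem hi

lemma mem_lc_iff_out {G : Type} [Group G] {I : Subgroup G} {A : Set G}
    (hA : ∀ a ∈ A, ∀ i ∈ I, a * i ∈ A)
    {z : G ⧸ I} : z ∈ leftCosetsIn I A ↔ Quotient.out z ∈ A := by
  constructor
  · rintro ⟨a, ha, rfl⟩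
    obtain ⟨h, hh⟩ := QuotientGroup.mk_out_eq_mul I a
    rw [hh]
    exact hA a ha h h.2
  · intro h
    exact ⟨Quotient.out z, h, QuotientGroup.out_eq' z⟩

variable (D : IwahoriHeckeSetup G W B M)

lemma mem_lc_C_iff {w : W} {z : G ⧸ D.I} :
    z ∈ leftCosetsIn D.I (D.C w) ↔ Quotient.out z ∈ D.C w :=
  mem_lc_iff_out (fun a ha i hi => D.mul_mem_C_right ha hi)

lemma q_eq (w : W) : D.q w = (leftCosetsIn D.I (D.C w)).ncard := (D.TF w).2

lemma q_pos (w : W) : 0 < D.q w := by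
  rw [D.q_eq w]
  exact (Set.ncard_pos (D.TF w).1).mpr
    ⟨QuotientGroup.mk ↑(D.rep w), ⟨_, D.rep_mem_C w, rfl⟩⟩

lemma lc_singleton_mul {G : Type} [Group G] (I : Subgroup G) (g : G) (A : Set G) :
    leftCosetsIn I ({g} * A) = (fun z => g • z) '' leftCosetsIn I A := by
  ext z
  constructor
  · rintro ⟨x, hx, rfl⟩
    obtain ⟨g', hg', a, ha, rfl⟩ := hx
    rcases hg' with rfl
    exact ⟨QuotientGroup.mk a, ⟨a, ha, rfl⟩, rfl⟩
  · rintro ⟨z', hz', rfl⟩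
    obtain ⟨a, ha, rfl⟩ := hz'
    exact ⟨g * a, ⟨g, rfl, a, ha, rfl⟩, rfl⟩

lemma ncard_lc_singleton_mul {G : Type} [Group G] (I : Subgroup G) (g : G) (A : Set G) :
    (leftCosetsIn I ({g} * A)).ncard = (leftCosetsIn I A).ncard := by
  rw [lc_singleton_mul]
  exact Set.ncard_image_of_injective _ (MulAction.injective g)

lemma C_om_mul_eq {u : W} (hu : u ∈ D.Om) (w : W) :
    D.C (u * w) = {(↑(D.rep u) : G)} * D.C w := by
  ext g
  constructor
  · intro hg
    rw [D.mem_C_iff (n := D.rep u * D.rep w) (by simp)] at hg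
    obtain ⟨i, hi, j, hj, rfl⟩ := hg
    have hmem : ((↑(D.rep u) : G)⁻¹ * i * ↑(D.rep u)) ∈ D.I := by
      have := D.TOm (D.rep u)⁻¹ (by simpa using inv_mem hu) i hi
      simpa using this
    refine ⟨↑(D.rep u), rfl, (↑(D.rep u) : G)⁻¹ * i * ↑(D.rep u) * ↑(D.rep w) * j, ?_,
      by push_cast; group⟩
    exact D.mul_mem_C_right (D.mul_mem_C_left (D.rep_mem_C w) hmem) hj
  · rintro ⟨g', hg', a, ha, rfl⟩
    rcases hg' with rfl
    obtain ⟨i, hi, j, hj, rfl⟩ := (D.mem_C_iff (D.π_rep w)).mp ha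
    refine (D.mem_C_iff (n := D.rep u * D.rep w) (by simp)).mpr
      ⟨↑(D.rep u) * i * (↑(D.rep u) : G)⁻¹, D.TOm _ (by simpa using hu) i hi, j, hj,
        by push_cast; group⟩

lemma q_om_mul {u : W} (hu : u ∈ D.Om) (w : W) : D.q (u * w) = D.q w := by
  rw [D.q_eq, D.q_eq, D.C_om_mul_eq hu w, ncard_lc_singleton_mul]

lemma q_one : D.q 1 = 1 := by
  rw [D.q_eq, D.C_one]
  have h : leftCosetsIn D.I (D.I : Set G) = {(QuotientGroup.mk 1 : G ⧸ D.I)} := by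
    ext z
    constructor
    · rintro ⟨a, ha, rfl⟩
      have h1 : (QuotientGroup.mk a : G ⧸ D.I) = QuotientGroup.mk 1 := by
        rw [QuotientGroup.eq]
        simpa using inv_mem ha
      simpa using h1
    · rintro rfl
      exact ⟨1, one_mem _, rfl⟩
  rw [h, Set.ncard_singleton]

lemma q_om' {u : W} (hu : u ∈ D.Om) : D.q u = 1 := by
  have h := D.q_om_mul hu 1
  rw [mul_one] at h
  rw [h, D.q_one]

lemma q_sW_two (b : B) : 2 ≤ D.q (D.sW b) := by
  have h4 := D.T4 b (D.rep (D.sW b)) (D.rep (D.sW b)) (D.π_rep _) (D.π_rep _)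
  push_neg at h4
  obtain ⟨i₀, hi₀, hni⟩ := h4
  have hg₀mem : (↑(D.rep (D.sW b)) : G) * i₀ * ↑(D.rep (D.sW b))
      ∈ D.C (D.sW b) * D.C (D.sW b) :=
    ⟨↑(D.rep (D.sW b)) * i₀, D.mul_mem_C_right (D.rep_mem_C _) hi₀,
      ↑(D.rep (D.sW b)), D.rep_mem_C _, by group⟩
  rw [D.C_sW_sq] at hg₀mem
  have hg₀s : (↑(D.rep (D.sW b)) : G) * i₀ * ↑(D.rep (D.sW b)) ∈ D.C (D.sW b) := by
    rcases hg₀mem with h | h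
    · exact absurd (by rwa [D.C_one] at h) hni
    · exact h
  have hne : (QuotientGroup.mk (↑(D.rep (D.sW b)) : G) : G ⧸ D.I)
      ≠ QuotientGroup.mk (↑(D.rep (D.sW b)) * i₀ * ↑(D.rep (D.sW b))) := by
    intro hEq
    have h1 := QuotientGroup.eq.mp hEq
    have h2 : (↑(D.rep (D.sW b)) : G)⁻¹ * (↑(D.rep (D.sW b)) * i₀ * ↑(D.rep (D.sW b)))
        = i₀ * ↑(D.rep (D.sW b)) := by group
    rw [h2] at h1
    have h3 : (↑(D.rep (D.sW b)) : G) ∈ D.I := by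
      have := mul_mem (inv_mem hi₀) h1
      simpa [← mul_assoc] using this
    have h5 : D.π (D.rep (D.sW b)) = 1 := (D.π_ker _).2 h3
    rw [D.π_rep] at h5
    exact D.sW_ne_one b h5
  have hsub : ({QuotientGroup.mk ↑(D.rep (D.sW b)),
      QuotientGroup.mk (↑(D.rep (D.sW b)) * i₀ * ↑(D.rep (D.sW b)))} : Set (G ⧸ D.I))
      ⊆ leftCosetsIn D.I (D.C (D.sW b)) := by
    rintro z (rfl | rfl)
    · exact ⟨_, D.rep_mem_C _, rfl⟩
    · exact ⟨_, hg₀s, rfl⟩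
  have hpair : ({QuotientGroup.mk ↑(D.rep (D.sW b)),
      QuotientGroup.mk (↑(D.rep (D.sW b)) * i₀ * ↑(D.rep (D.sW b)))} : Set (G ⧸ D.I)).ncard
      = 2 := by
    rw [Set.ncard_insert_of_notMem (by simpa using hne), Set.ncard_singleton]
  calc 2 = _ := hpair.symm
  _ ≤ (leftCosetsIn D.I (D.C (D.sW b))).ncard := Set.ncard_le_ncard hsub (D.TF _).1
  _ = D.q (D.sW b) := (D.q_eq _).symm

lemma pair_eq_of_mk_eq {b : B} {w : W} (hlen : D.len (D.sW b * w) = D.len w + 1)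
    {y y' z z' : G ⧸ D.I}
    (hy : Quotient.out y ∈ D.C (D.sW b)) (hy' : Quotient.out y' ∈ D.C (D.sW b))
    (hz : Quotient.out z ∈ D.C w) (hz' : Quotient.out z' ∈ D.C w)
    (hEq : QuotientGroup.mk (Quotient.out y * Quotient.out z)
      = (QuotientGroup.mk (Quotient.out y' * Quotient.out z') : G ⧸ D.I)) :
    y = y' ∧ z = z' := by
  have hC : D.C (D.sW b) * D.C w = D.C (D.sW b * w) :=
    D.CsC_eq (D.len w) w b rfl (by omega)
  have hi := QuotientGroup.eq.mp hEq
  have hinv : (Quotient.out y)⁻¹ ∈ D.C (D.sW b) := by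
    have := D.mem_C_inv.mp hy
    rwa [D.sW_inv] at this
  have hins : (Quotient.out y)⁻¹ * Quotient.out y' ∈ D.C 1 ∪ D.C (D.sW b) := by
    rw [← D.C_sW_sq]
    exact ⟨_, hinv, _, hy', rfl⟩
  rcases hins with hcase | hcase
  · rw [D.C_one] at hcase
    have hyy : y = y' := by
      have h1 : (QuotientGroup.mk (Quotient.out y) : G ⧸ D.I)
          = QuotientGroup.mk (Quotient.out y') := (QuotientGroup.eq).mpr hcase
      rwa [QuotientGroup.out_eq', QuotientGroup.out_eq'] at h1
    subst hyy
    refine ⟨rfl, ?_⟩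
    have heq3 : (Quotient.out y * Quotient.out z)⁻¹ * (Quotient.out y * Quotient.out z')
        = (Quotient.out z)⁻¹ * Quotient.out z' := by group
    rw [heq3] at hi
    have h1 : (QuotientGroup.mk (Quotient.out z) : G ⧸ D.I)
        = QuotientGroup.mk (Quotient.out z') := (QuotientGroup.eq).mpr hi
    rwa [QuotientGroup.out_eq', QuotientGroup.out_eq'] at h1
  · exfalso
    have hzeq : Quotient.out z' = ((Quotient.out y)⁻¹ * Quotient.out y')⁻¹
        * (Quotient.out z * ((Quotient.out y * Quotient.out z)⁻¹
          * (Quotient.out y' * Quotient.out z'))) := by group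
    have hmem2 : ((Quotient.out y)⁻¹ * Quotient.out y')⁻¹ ∈ D.C (D.sW b) := by
      have := D.mem_C_inv.mp hcase
      rwa [D.sW_inv] at this
    have hmem3 : Quotient.out z * ((Quotient.out y * Quotient.out z)⁻¹
        * (Quotient.out y' * Quotient.out z')) ∈ D.C w := D.mul_mem_C_right hz hi
    have hmem4 : Quotient.out z' ∈ D.C (D.sW b * w) := by
      rw [← hC, hzeq]
      exact ⟨_, hmem2, _, hmem3, rfl⟩
    have hne : w ≠ D.sW b * w := by
      intro hh
      rw [← hh] at hlen
      omega
    exact Set.disjoint_left.mp (D.T0_disjoint w (D.sW b * w) hne) hz' hmem4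

lemma q_simple_mul {b : B} {w : W} (hlen : D.len (D.sW b * w) = D.len w + 1) :
    D.q (D.sW b * w) = D.q (D.sW b) * D.q w := by
  classical
  have hC : D.C (D.sW b) * D.C w = D.C (D.sW b * w) :=
    D.CsC_eq (D.len w) w b rfl (by omega)
  have hfinS := (D.TF (D.sW b)).1
  have hfinW := (D.TF w).1
  have hfinT := (D.TF (D.sW b * w)).1
  have key : hfinT.toFinset = hfinS.toFinset.biUnion (fun y => hfinW.toFinset.image
      (fun z => QuotientGroup.mk (Quotient.out y * Quotient.out z))) := by
    apply Finset.ext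
    intro t
    simp only [Finset.mem_biUnion, Finset.mem_image, Set.Finite.mem_toFinset]
    constructor
    · intro ht
      have h1 : Quotient.out t ∈ D.C (D.sW b) * D.C w := by
        rw [hC]
        exact D.mem_lc_C_iff.mp ht
      obtain ⟨p, hp, r, hr, hpr0⟩ := h1
      have hpr : p * r = Quotient.out t := hpr0
      obtain ⟨i, hi⟩ := QuotientGroup.mk_out_eq_mul D.I p
      have hpi : Quotient.out (QuotientGroup.mk p : G ⧸ D.I) ∈ D.C (D.sW b) := by
        rw [hi]; exact D.mul_mem_C_right hp i.2
      obtain ⟨j, hj⟩ := QuotientGroup.mk_out_eq_mul D.I ((↑i)⁻¹ * r)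
      have hr2 : ((↑i : G)⁻¹ * r) ∈ D.C w := D.mul_mem_C_left hr (inv_mem i.2)
      have hrj : Quotient.out (QuotientGroup.mk ((↑i : G)⁻¹ * r) : G ⧸ D.I) ∈ D.C w := by
        rw [hj]; exact D.mul_mem_C_right hr2 j.2
      refine ⟨QuotientGroup.mk p, D.mem_lc_C_iff.mpr hpi,
        QuotientGroup.mk ((↑i : G)⁻¹ * r), D.mem_lc_C_iff.mpr hrj, ?_⟩
      rw [hi, hj]
      have heq : p * ↑i * ((↑i : G)⁻¹ * r * ↑j) = (p * r) * ↑j := by group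
      rw [heq, mk_mul_right_mem j.2, hpr]
      exact QuotientGroup.out_eq' t
    · rintro ⟨y, hy, z, hz, rfl⟩
      have hy' : Quotient.out y ∈ D.C (D.sW b) := D.mem_lc_C_iff.mp hy
      have hz' : Quotient.out z ∈ D.C w := D.mem_lc_C_iff.mp hz
      have hmem : Quotient.out y * Quotient.out z ∈ D.C (D.sW b * w) := by
        rw [← hC]
        exact ⟨_, hy', _, hz', rfl⟩
      exact ⟨_, hmem, rfl⟩
  have hcard : hfinT.toFinset.card = hfinS.toFinset.card * hfinW.toFinset.card := by
    rw [key, Finset.card_biUnion]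
    · have hconst : ∀ y ∈ hfinS.toFinset, (hfinW.toFinset.image
          (fun z => QuotientGroup.mk (Quotient.out y * Quotient.out z) : _ → G ⧸ D.I)).card
          = hfinW.toFinset.card := by
        intro y hy
        apply Finset.card_image_of_injOn
        intro z hz z' hz' hEq
        rw [Set.Finite.mem_toFinset] at hy
        rw [Finset.mem_coe, Set.Finite.mem_toFinset] at hz hz'
        exact (D.pair_eq_of_mk_eq hlen (D.mem_lc_C_iff.mp hy) (D.mem_lc_C_iff.mp hy)
          (D.mem_lc_C_iff.mp hz) (D.mem_lc_C_iff.mp hz') hEq).2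
      rw [Finset.sum_congr rfl hconst, Finset.sum_const, smul_eq_mul]
    · intro y hy y' hy' hne
      rw [Finset.mem_coe, Set.Finite.mem_toFinset] at hy hy'
      rw [Function.onFun, Finset.disjoint_left]
      intro t ht ht'
      rw [Finset.mem_image] at ht ht'
      obtain ⟨z, hz, hzeq⟩ := ht
      obtain ⟨z', hz', hzeq'⟩ := ht'
      rw [Set.Finite.mem_toFinset] at hz hz'
      apply hne
      exact (D.pair_eq_of_mk_eq hlen (D.mem_lc_C_iff.mp hy) (D.mem_lc_C_iff.mp hy')
        (D.mem_lc_C_iff.mp hz) (D.mem_lc_C_iff.mp hz') (hzeq.trans hzeq'.symm)).1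
  rw [D.q_eq, D.q_eq, D.q_eq,
    Set.ncard_eq_toFinset_card _ hfinT, Set.ncard_eq_toFinset_card _ hfinS,
    Set.ncard_eq_toFinset_card _ hfinW]
  exact hcard

lemma q_mul_of_len_add : ∀ n (w w' : W), D.len w = n →
    D.len w + D.len w' = D.len (w * w') → D.q w * D.q w' = D.q (w * w') := by
  intro n
  induction n with
  | zero =>
    intro w w' hw _
    have hu : w ∈ D.Om := D.len_zero_iff.mp hw
    rw [D.q_om' hu, D.q_om_mul hu, one_mul]
  | succ n ih =>
    intro w w' hw hadd
    obtain ⟨b, hb⟩ := D.exists_left_descent (w := w) (by omega)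
    have hwv : D.sW b * (D.sW b * w) = w := D.sW_mul_cancel b w
    have hlenv : D.len (D.sW b * w) = n := by omega
    obtain ⟨h1, h2⟩ := D.sandwich (b := b) (v := D.sW b * w) (w' := w') (by rw [hwv]; omega)
    have hIH : D.q (D.sW b * w) * D.q w' = D.q (D.sW b * w * w') :=
      ih (D.sW b * w) w' hlenv (by omega)
    have hq1 : D.q w = D.q (D.sW b) * D.q (D.sW b * w) := by
      have := D.q_simple_mul (b := b) (w := D.sW b * w) (by rw [hwv]; omega)
      rwa [hwv] at this
    have hsvw : D.sW b * (D.sW b * w * w') = w * w' := D.sW_shift b w w'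
    have hq2 : D.q (w * w') = D.q (D.sW b) * D.q (D.sW b * w * w') := by
      have := D.q_simple_mul (b := b) (w := D.sW b * w * w') (by omega)
      rwa [hsvw] at this
    rw [hq1, hq2, ← hIH]
    ring

lemma q_lt_of_len_lt : ∀ n (w w' : W), D.len w = n →
    D.len (w * w') < D.len w + D.len w' → D.q (w * w') < D.q w * D.q w' := by
  intro n
  induction n with
  | zero =>
    intro w w' hw hlt
    exfalso
    rw [D.len_om_mul (D.len_zero_iff.mp hw)] at hlt
    omega
  | succ n ih =>
    intro w w' hw hlt
    obtain ⟨b, hb⟩ := D.exists_left_descent (w := w) (by omega)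
    have hwv : D.sW b * (D.sW b * w) = w := D.sW_mul_cancel b w
    have hlenv : D.len (D.sW b * w) = n := by omega
    have hq1 : D.q w = D.q (D.sW b) * D.q (D.sW b * w) := by
      have := D.q_simple_mul (b := b) (w := D.sW b * w) (by rw [hwv]; omega)
      rwa [hwv] at this
    have hsvw : D.sW b * (D.sW b * w * w') = w * w' := D.sW_shift b w w'
    have hqs := D.q_sW_two b
    have hposv := D.q_pos (D.sW b * w)
    have hposw' := D.q_pos w'
    have hposz := D.q_pos (D.sW b * w * w')
    have hposww' := D.q_pos (w * w')
    by_cases hcase : D.len (D.sW b * w * w') = D.len (D.sW b * w) + D.len w'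
    · have hsz : D.len (D.sW b * (D.sW b * w * w')) + 1 = D.len (D.sW b * w * w') := by
        rcases D.len_sW_mul b (D.sW b * w * w') with h | h
        · exfalso
          rw [hsvw] at h
          omega
        · exact h
      have hqz : D.q (D.sW b * w) * D.q w' = D.q (D.sW b * w * w') :=
        D.q_mul_of_len_add (D.len (D.sW b * w)) _ _ rfl (by omega)
      have hqz2 : D.q (D.sW b * w * w')
          = D.q (D.sW b) * D.q (D.sW b * (D.sW b * w * w')) := by
        have h3 : D.sW b * (D.sW b * (D.sW b * w * w')) = D.sW b * w * w' :=
          D.sW_mul_cancel b _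
        have := D.q_simple_mul (b := b) (w := D.sW b * (D.sW b * w * w'))
          (by rw [h3]; omega)
        rwa [h3] at this
      have hqfin : D.q (w * w') = D.q (D.sW b * (D.sW b * w * w')) := by
        rw [← hsvw]
      have hpos2 := D.q_pos (D.sW b * (D.sW b * w * w'))
      rw [hqfin, hq1]
      nlinarith
    · have hlt' : D.len (D.sW b * w * w') < D.len (D.sW b * w) + D.len w' := by
        have := D.len_mul_le (D.sW b * w) w'
        omega
      have hIH := ih (D.sW b * w) w' hlenv hlt'
      rcases D.len_sW_mul b (D.sW b * w * w') with h | h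
      · have hq2 : D.q (w * w') = D.q (D.sW b) * D.q (D.sW b * w * w') := by
          have := D.q_simple_mul (b := b) (w := D.sW b * w * w') (by omega)
          rwa [hsvw] at this
        rw [hq2, hq1]
        nlinarith
      · -- len (s * z) + 1 = len z, z := s*w*w'
        have h3 : D.sW b * (D.sW b * (D.sW b * w * w')) = D.sW b * w * w' :=
          D.sW_mul_cancel b _
        have hqz2 : D.q (D.sW b * w * w')
            = D.q (D.sW b) * D.q (D.sW b * (D.sW b * w * w')) := by
          have := D.q_simple_mul (b := b) (w := D.sW b * (D.sW b * w * w'))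
            (by rw [h3]; omega)
          rwa [h3] at this
        have hqfin : D.q (w * w') = D.q (D.sW b * (D.sW b * w * w')) := by
          rw [← hsvw]
        rw [hqfin, hq1]
        nlinarith

lemma len_add_iff_q_mul (w w' : W) :
    D.len w + D.len w' = D.len (w * w') ↔ D.q w * D.q w' = D.q (w * w') := by
  constructor
  · exact D.q_mul_of_len_add (D.len w) w w' rfl
  · intro hq
    by_contra hne
    have hlt : D.len (w * w') < D.len w + D.len w' :=
      lt_of_le_of_ne (D.len_mul_le w w') (Ne.symm hne)
    have := D.q_lt_of_len_lt (D.len w) w w' rfl hlt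
    omega

end IwahoriHeckeSetup

section FinsetHelpers

variable {α β : Type} [DecidableEq α] [DecidableEq β]

lemma card_filter_product_fst {A : Finset α} {B : Finset β} (P : α → β → Prop)
    [∀ a b, Decidable (P a b)] :
    ((A ×ˢ B).filter (fun p => P p.1 p.2)).card
      = ∑ y ∈ A, (B.filter (fun z => P y z)).card := by
  rw [Finset.card_eq_sum_card_fiberwise (f := Prod.fst) (t := A)
    (fun p hp => (Finset.mem_product.mp (Finset.mem_filter.mp hp).1).1)]
  apply Finset.sum_congr rfl
  intro y hy
  have himg : ((A ×ˢ B).filter (fun p => P p.1 p.2)).filter (fun p => p.1 = y)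
      = (B.filter (fun z => P y z)).image (fun z => (y, z)) := by
    apply Finset.ext
    rintro ⟨a, b⟩
    simp only [Finset.mem_filter, Finset.mem_image, Finset.mem_product]
    constructor
    · rintro ⟨⟨⟨ha, hb⟩, hP⟩, heq⟩
      subst heq
      exact ⟨b, ⟨hb, hP⟩, rfl⟩
    · rintro ⟨z, ⟨hz, hP⟩, heq⟩
      injection heq with h1 h2
      subst h1
      subst h2
      exact ⟨⟨⟨hy, hz⟩, hP⟩, rfl⟩
  rw [himg, Finset.card_image_of_injective _ (fun z z' h => by simpa using h)]

lemma card_filter_product_snd {A : Finset α} {B : Finset β} (P : α → β → Prop)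
    [∀ a b, Decidable (P a b)] :
    ((A ×ˢ B).filter (fun p => P p.1 p.2)).card
      = ∑ z ∈ B, (A.filter (fun y => P y z)).card := by
  rw [Finset.card_eq_sum_card_fiberwise (f := Prod.snd) (t := B)
    (fun p hp => (Finset.mem_product.mp (Finset.mem_filter.mp hp).1).2)]
  apply Finset.sum_congr rfl
  intro z hz
  have himg : ((A ×ˢ B).filter (fun p => P p.1 p.2)).filter (fun p => p.2 = z)
      = (A.filter (fun y => P y z)).image (fun y => (y, z)) := by
    apply Finset.ext
    rintro ⟨a, b⟩
    simp only [Finset.mem_filter, Finset.mem_image, Finset.mem_product]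
    constructor
    · rintro ⟨⟨⟨ha, hb⟩, hP⟩, heq⟩
      subst heq
      exact ⟨a, ⟨ha, hP⟩, rfl⟩
    · rintro ⟨y, ⟨hy, hP⟩, heq⟩
      injection heq with h1 h2
      subst h1
      subst h2
      exact ⟨⟨⟨hy, hz⟩, hP⟩, rfl⟩
  rw [himg, Finset.card_image_of_injective _ (fun y y' h => by simpa using h)]

lemma sum_eq_one_of_sum_eq_card {s : Finset α} {f : α → ℕ}
    (h1 : ∀ a ∈ s, 1 ≤ f a) (h2 : ∑ a ∈ s, f a = s.card) : ∀ a ∈ s, f a = 1 := by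
  intro a ha
  by_contra hne
  have h4 : ∑ _a ∈ s, 1 < ∑ a ∈ s, f a :=
    Finset.sum_lt_sum h1 ⟨a, ha, by have := h1 a ha; omega⟩
  rw [Finset.sum_const, smul_eq_mul, mul_one] at h4
  omega

end FinsetHelpers

namespace IwahoriHeckeSetup

open Set Pointwise

variable {G W B : Type} [Group G] [Group W] {M : CoxeterMatrix B}
variable (D : IwahoriHeckeSetup G W B M)

/-- The set of cosets contributing to the convolution value at `x`. -/
def convSet (w w' : W) (x : G) : Set (G ⧸ D.I) :=
  {y : G ⧸ D.I | Quotient.out y ∈ D.C w ∧ (Quotient.out y)⁻¹ * x ∈ D.C w'}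

lemma convSet_subset (w w' : W) (x : G) :
    D.convSet w w' x ⊆ leftCosetsIn D.I (D.C w) := fun _ hy => D.mem_lc_C_iff.mpr hy.1

lemma convSet_finite (w w' : W) (x : G) : (D.convSet w w' x).Finite :=
  Set.Finite.subset (D.TF w).1 (D.convSet_subset w w' x)

lemma iw_apply_mem {w : W} {x : G} (h : x ∈ D.C w) : iw D.I D.π w x = 1 := by
  simp only [iw]
  exact Set.indicator_of_mem h _

lemma iw_apply_not_mem {w : W} {x : G} (h : x ∉ D.C w) : iw D.I D.π w x = 0 := by
  simp only [iw]
  exact Set.indicator_of_notMem h _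

lemma hconv_eq (w w' : W) (x : G) :
    hconv D.I (iw D.I D.π w) (iw D.I D.π w') x = ((D.convSet w w' x).ncard : ℤ) := by
  classical
  have hfin := D.convSet_finite w w' x
  have hfun : (fun y : G ⧸ D.I => iw D.I D.π w (Quotient.out y)
      * iw D.I D.π w' ((Quotient.out y)⁻¹ * x))
      = Set.indicator (D.convSet w w' x) (fun _ => (1 : ℤ)) := by
    funext y
    by_cases h1 : Quotient.out y ∈ D.C w
    · by_cases h2 : (Quotient.out y)⁻¹ * x ∈ D.C w'
      · have hy : y ∈ D.convSet w w' x := ⟨h1, h2⟩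
        rw [D.iw_apply_mem h1, D.iw_apply_mem h2, Set.indicator_of_mem hy]
        norm_num
      · rw [D.iw_apply_not_mem h2, Set.indicator_of_notMem (fun hc => h2 hc.2)]
        ring
    · rw [D.iw_apply_not_mem h1, Set.indicator_of_notMem (fun hc => h1 hc.1)]
      ring
  show (∑ᶠ y : G ⧸ D.I, iw D.I D.π w (Quotient.out y)
      * iw D.I D.π w' ((Quotient.out y)⁻¹ * x)) = _
  rw [hfun]
  rw [finsum_eq_finset_sum_of_support_subset _ (s := hfin.toFinset)
    (by rw [Set.Finite.coe_toFinset]; exact Set.support_indicator_subset)]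
  rw [Finset.sum_congr rfl (fun y hy => Set.indicator_of_mem
    ((Set.Finite.mem_toFinset hfin).mp hy) _)]
  rw [Finset.sum_const, Set.ncard_eq_toFinset_card _ hfin]
  simp

lemma convSet_nonempty_iff (w w' : W) (x : G) :
    (D.convSet w w' x).Nonempty ↔ x ∈ D.C w * D.C w' := by
  constructor
  · rintro ⟨y, hy1, hy2⟩
    exact ⟨Quotient.out y, hy1, (Quotient.out y)⁻¹ * x, hy2, by group⟩
  · rintro ⟨p, hp, r, hr, hpr⟩
    have hpr' : p * r = x := hpr
    obtain ⟨i, hi⟩ := QuotientGroup.mk_out_eq_mul D.I p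
    refine ⟨QuotientGroup.mk p, ?_, ?_⟩
    · show Quotient.out (QuotientGroup.mk p : G ⧸ D.I) ∈ D.C w
      rw [hi]
      exact D.mul_mem_C_right hp i.2
    · show (Quotient.out (QuotientGroup.mk p : G ⧸ D.I))⁻¹ * x ∈ D.C w'
      rw [hi, ← hpr']
      have heq : (p * ↑i)⁻¹ * (p * r) = (↑i : G)⁻¹ * r := by group
      rw [heq]
      exact D.mul_mem_C_left hr (inv_mem i.2)

lemma convSet_mul_right {w w' : W} {x i : G} (hi : i ∈ D.I) :
    D.convSet w w' (x * i) = D.convSet w w' x := by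
  ext y
  constructor
  · rintro ⟨h1, h2⟩
    refine ⟨h1, ?_⟩
    have heq : (Quotient.out y)⁻¹ * x = ((Quotient.out y)⁻¹ * (x * i)) * i⁻¹ := by group
    rw [heq]
    exact D.mul_mem_C_right h2 (inv_mem hi)
  · rintro ⟨h1, h2⟩
    refine ⟨h1, ?_⟩
    have heq : (Quotient.out y)⁻¹ * (x * i) = ((Quotient.out y)⁻¹ * x) * i := by group
    rw [heq]
    exact D.mul_mem_C_right h2 hi

lemma prod_eq_of_hconv (w w' : W)
    (h : hconv D.I (iw D.I D.π w) (iw D.I D.π w') = iw D.I D.π (w * w')) :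
    D.C (w * w') = D.C w * D.C w' := by
  ext x
  constructor
  · intro hx
    have h1 : hconv D.I (iw D.I D.π w) (iw D.I D.π w') x = 1 := by
      rw [h]; exact D.iw_apply_mem hx
    rw [D.hconv_eq] at h1
    have h2 : (D.convSet w w' x).Nonempty := by
      rw [Set.nonempty_iff_ne_empty]
      intro hememp
      rw [hememp] at h1
      simp at h1
    exact (D.convSet_nonempty_iff w w' x).mp h2
  · intro hx
    have h2 : (D.convSet w w' x).Nonempty := (D.convSet_nonempty_iff w w' x).mpr hx
    have h1 : hconv D.I (iw D.I D.π w) (iw D.I D.π w') x ≠ 0 := by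
      rw [D.hconv_eq]
      have hpos := (Set.ncard_pos (D.convSet_finite w w' x)).mpr h2
      exact_mod_cast hpos.ne'
    rw [h] at h1
    by_contra hmem
    exact h1 (D.iw_apply_not_mem hmem)

lemma convSet_ncard_one {w w' : W} (hprod : D.C w * D.C w' = D.C (w * w'))
    {x : G} (hx : x ∈ D.C (w * w')) : (D.convSet w w' x).ncard = 1 := by
  classical
  have hlen := D.len_add_of_prod_eq hprod
  have hq : D.q w * D.q w' = D.q (w * w') := D.q_mul_of_len_add (D.len w) w w' rfl hlen
  have hfinW := (D.TF w).1
  have hfinT := (D.TF (w * w')).1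
  -- first marginal: for each coset y of C w, the cosets z of C (w*w') with out y⁻¹ out z ∈ C w'
  have hfib1 : ∀ y ∈ hfinW.toFinset,
      ((hfinT.toFinset).filter
        (fun z => (Quotient.out y)⁻¹ * Quotient.out z ∈ D.C w')).card = D.q w' := by
    intro y hy
    have hyC : Quotient.out y ∈ D.C w :=
      D.mem_lc_C_iff.mp ((Set.Finite.mem_toFinset hfinW).mp hy)
    have hset : ↑((hfinT.toFinset).filter
        (fun z => (Quotient.out y)⁻¹ * Quotient.out z ∈ D.C w'))
        = leftCosetsIn D.I ({Quotient.out y} * D.C w') := by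
      ext z
      simp only [Finset.coe_filter, Set.mem_setOf_eq, Set.Finite.mem_toFinset]
      constructor
      · rintro ⟨hz, hcond⟩
        refine mem_lc_iff_out ?_ |>.mpr ?_
        · rintro a ⟨g', hg', c, hc, rfl⟩ j hj
          rcases hg' with rfl
          exact ⟨Quotient.out y, rfl, c * j, D.mul_mem_C_right hc hj, by group⟩
        · exact ⟨Quotient.out y, rfl, (Quotient.out y)⁻¹ * Quotient.out z, hcond, by group⟩
      · intro hz
        have hz' : Quotient.out z ∈ {Quotient.out y} * D.C w' := by
          refine (mem_lc_iff_out ?_).mp hz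
          rintro a ⟨g', hg', c, hc, rfl⟩ j hj
          rcases hg' with rfl
          exact ⟨Quotient.out y, rfl, c * j, D.mul_mem_C_right hc hj, by group⟩
        obtain ⟨g', hg', c, hc, hpc⟩ := hz'
        rcases hg' with rfl
        have hpc' : Quotient.out y * c = Quotient.out z := hpc
        constructor
        · apply D.mem_lc_C_iff.mpr
          rw [← hpc', ← hprod]
          exact ⟨Quotient.out y, hyC, c, hc, rfl⟩
        · rw [← hpc']
          have : (Quotient.out y)⁻¹ * (Quotient.out y * c) = c := by group
          rw [this]
          exact hc
    have := congrArg Set.ncard hset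
    rw [Set.ncard_coe_finset] at this
    rw [this, ncard_lc_singleton_mul, ← D.q_eq]
  -- second marginal: fibers are the convolution sets
  have hfib2 : ∀ z : G ⧸ D.I, ((hfinW.toFinset).filter
      (fun y => (Quotient.out y)⁻¹ * Quotient.out z ∈ D.C w')).card
      = (D.convSet w w' (Quotient.out z)).ncard := by
    intro z
    have hset : ↑((hfinW.toFinset).filter
        (fun y => (Quotient.out y)⁻¹ * Quotient.out z ∈ D.C w'))
        = D.convSet w w' (Quotient.out z) := by
      ext y
      simp only [Finset.coe_filter, Set.mem_setOf_eq, Set.Finite.mem_toFinset]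
      constructor
      · rintro ⟨hy, hcond⟩
        exact ⟨D.mem_lc_C_iff.mp hy, hcond⟩
      · rintro ⟨hy, hcond⟩
        exact ⟨D.mem_lc_C_iff.mpr hy, hcond⟩
    have := congrArg Set.ncard hset
    rw [Set.ncard_coe_finset] at this
    rw [this]
  -- total count both ways
  have hstep := card_filter_product_snd (A := hfinW.toFinset) (B := hfinT.toFinset)
    (fun y z => (Quotient.out y)⁻¹ * Quotient.out z ∈ D.C w')
  have hstep2 := card_filter_product_fst (A := hfinW.toFinset) (B := hfinT.toFinset)
    (fun y z => (Quotient.out y)⁻¹ * Quotient.out z ∈ D.C w')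
  have hcount : ∑ z ∈ hfinT.toFinset, (D.convSet w w' (Quotient.out z)).ncard
      = hfinW.toFinset.card * D.q w' := by
    calc ∑ z ∈ hfinT.toFinset, (D.convSet w w' (Quotient.out z)).ncard
        = ∑ z ∈ hfinT.toFinset, ((hfinW.toFinset).filter
            (fun y => (Quotient.out y)⁻¹ * Quotient.out z ∈ D.C w')).card :=
          Finset.sum_congr rfl (fun z _ => (hfib2 z).symm)
    _ = ((hfinW.toFinset ×ˢ hfinT.toFinset).filter
          (fun p => (Quotient.out p.1)⁻¹ * Quotient.out p.2 ∈ D.C w')).card := hstep.symm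
    _ = ∑ y ∈ hfinW.toFinset, ((hfinT.toFinset).filter
          (fun z => (Quotient.out y)⁻¹ * Quotient.out z ∈ D.C w')).card := hstep2
    _ = ∑ _y ∈ hfinW.toFinset, D.q w' := Finset.sum_congr rfl hfib1
    _ = hfinW.toFinset.card * D.q w' := by rw [Finset.sum_const, smul_eq_mul]
  have hcardW : hfinW.toFinset.card = D.q w := by
    rw [D.q_eq, Set.ncard_eq_toFinset_card _ hfinW]
  have hcardT : hfinT.toFinset.card = D.q (w * w') := by
    rw [D.q_eq, Set.ncard_eq_toFinset_card _ hfinT]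
  have hone : ∀ z ∈ hfinT.toFinset, (D.convSet w w' (Quotient.out z)).ncard = 1 := by
    apply sum_eq_one_of_sum_eq_card
    · intro z hz
      have hzC : Quotient.out z ∈ D.C (w * w') :=
        D.mem_lc_C_iff.mp ((Set.Finite.mem_toFinset hfinT).mp hz)
      have hne : (D.convSet w w' (Quotient.out z)).Nonempty := by
        rw [D.convSet_nonempty_iff, hprod]
        exact hzC
      exact (Set.ncard_pos (D.convSet_finite w w' _)).mpr hne
    · rw [hcount, hcardW, hcardT, hq]
  -- specialize to x
  have hzx : (QuotientGroup.mk x : G ⧸ D.I) ∈ hfinT.toFinset := by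
    rw [Set.Finite.mem_toFinset]
    exact ⟨x, hx, rfl⟩
  have h1 := hone _ hzx
  obtain ⟨i, hi⟩ := QuotientGroup.mk_out_eq_mul D.I x
  rw [hi, D.convSet_mul_right i.2] at h1
  exact h1

lemma hconv_of_prod_eq (w w' : W) (hprod : D.C (w * w') = D.C w * D.C w') :
    hconv D.I (iw D.I D.π w) (iw D.I D.π w') = iw D.I D.π (w * w') := by
  funext x
  by_cases hx : x ∈ D.C (w * w')
  · rw [D.hconv_eq, D.convSet_ncard_one hprod.symm hx, D.iw_apply_mem hx]
    norm_num
  · rw [D.hconv_eq, D.iw_apply_not_mem hx]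
    have hempty : D.convSet w w' x = ∅ := by
      rw [← Set.not_nonempty_iff_eq_empty]
      intro hne
      apply hx
      rw [hprod]
      exact (D.convSet_nonempty_iff w w' x).mp hne
    rw [hempty]
    simp

end IwahoriHeckeSetup


/-- For `w, w' ∈ W̃` the following are equivalent:
(i) `i_w ⋆ i_{w'} = i_{ww'}` in `H(G,I)`;
(ii) `Iww'I = IwIw'I (= IwI·Iw'I)` as subsets of `G`;
(iii) `ℓ(w) + ℓ(w') = ℓ(ww')`;
(iv) `q_w·q_{w'} = q_{ww'}`. -/
theorem hconv_iw_tfae {G W B : Type} [Group G] [Group W]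
    {M : CoxeterMatrix B} (D : IwahoriHeckeSetup G W B M) (w w' : W) :
    (hconv D.I (iw D.I D.π w) (iw D.I D.π w') = iw D.I D.π (w * w') ↔
        IwI D.I D.π (w * w') = IwI D.I D.π w * IwI D.I D.π w') ∧
    (IwI D.I D.π (w * w') = IwI D.I D.π w * IwI D.I D.π w' ↔
        D.len w + D.len w' = D.len (w * w')) ∧
    (D.len w + D.len w' = D.len (w * w') ↔ D.q w * D.q w' = D.q (w * w')) := by
  refine ⟨⟨?_, ?_⟩, ⟨?_, ?_⟩, D.len_add_iff_q_mul w w'⟩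
  · intro h
    exact D.prod_eq_of_hconv w w' h
  · intro h
    exact D.hconv_of_prod_eq w w' h
  · intro h
    exact D.len_add_of_prod_eq h.symm
  · intro h
    exact (D.prod_eq_of_len_add (D.len w) w w' rfl h).symm
end
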